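/- arXiv:1211.7301 — 7 statements merged into one kernel-verified Lean document; each statement's English description precedes it below -/
import Mathlib

section
/- For every T > 0 and every real K, the spatial Fourier transform of the Green's function equals the decaying quartic exponential: ∫_ℝ G(X,T) · exp(−iKX) dX = exp(−K⁴T). -/
open MeasureTheory Real

/-- The Green's function of the linearized capillary-driven thin film equation. -/
noncomputable def greenFn (X T : ℝ) : ℝ :=
  (1 / (2 * Real.pi)) * ∫ K : ℝ, Real.exp (-K ^ 4 * T) * Real.cos (K * X)


lemma contDiff_qexp (c : ℝ) : ContDiff ℝ (⊤ : ℕ∞) (fun x : ℝ => Real.exp (-(c * x ^ 4))) :=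
  Real.contDiff_exp.comp ((contDiff_const.mul (contDiff_id.pow 4)).neg)

lemma hasDerivAt_qexp (c x : ℝ) :
    HasDerivAt (fun x : ℝ => Real.exp (-(c * x ^ 4)))
      (Real.exp (-(c * x ^ 4)) * (-(c * (4 * x ^ 3)))) x := by
  have h1 : HasDerivAt (fun x : ℝ => -(c * x ^ 4)) (-(c * (4 * x ^ 3))) x := by
    simpa using ((hasDerivAt_pow 4 x).const_mul c).fun_neg
  simpa using h1.exp

lemma iteratedDeriv_qexp (c : ℝ) (n : ℕ) :
    ∃ P : Polynomial ℝ, ∀ x, iteratedDeriv n (fun x : ℝ => Real.exp (-(c * x ^ 4))) x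
      = P.eval x * Real.exp (-(c * x ^ 4)) := by
  induction n with
  | zero => exact ⟨1, fun x => by simp⟩
  | succ n ih =>
    obtain ⟨P, hP⟩ := ih
    refine ⟨P.derivative + P * (Polynomial.C (-(4 * c)) * Polynomial.X ^ 3), fun x => ?_⟩
    rw [iteratedDeriv_succ, funext hP]
    have h : HasDerivAt (fun x : ℝ => P.eval x * Real.exp (-(c * x ^ 4)))
        (P.derivative.eval x * Real.exp (-(c * x ^ 4))
          + P.eval x * (Real.exp (-(c * x ^ 4)) * (-(c * (4 * x ^ 3))))) x :=
      (P.hasDerivAt x).mul (hasDerivAt_qexp c x)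
    rw [h.deriv]
    simp only [Polynomial.eval_add, Polynomial.eval_mul, Polynomial.eval_C, Polynomial.eval_pow,
      Polynomial.eval_X]
    ring


lemma pow_mul_qexp_le (c : ℝ) (hc : 0 < c) (m : ℕ) :
    ∃ C, ∀ x : ℝ, |x| ^ m * Real.exp (-(c * x ^ 4)) ≤ C := by
  refine ⟨max 1 (m.factorial / c ^ m), fun x => ?_⟩
  rcases le_or_gt |x| 1 with h | h
  · refine le_trans ?_ (le_max_left _ _)
    have h1 : |x| ^ m ≤ 1 := pow_le_one₀ (abs_nonneg x) h
    have h2 : Real.exp (-(c * x ^ 4)) ≤ 1 := by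
      rw [Real.exp_le_one_iff]
      have : 0 ≤ c * x ^ 4 := by positivity
      linarith
    calc |x| ^ m * Real.exp (-(c * x ^ 4)) ≤ 1 * 1 :=
          mul_le_mul h1 h2 (Real.exp_pos _).le zero_le_one
      _ = 1 := by ring
  · refine le_trans ?_ (le_max_right _ _)
    have hx : (0:ℝ) < x ^ 4 := by
      have : (0:ℝ) < |x| := lt_trans one_pos h
      have hx0 : x ≠ 0 := by simpa [abs_eq_zero] using this.ne'
      positivity
    have ht : 0 < c * x ^ 4 := by positivity
    have key : (c * x ^ 4) ^ m / m.factorial ≤ Real.exp (c * x ^ 4) :=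
      Real.pow_div_factorial_le_exp _ ht.le m
    have hden : (0:ℝ) < (c * x ^ 4) ^ m / m.factorial := by positivity
    have h2 : Real.exp (-(c * x ^ 4)) ≤ m.factorial / (c * x ^ 4) ^ m := by
      rw [Real.exp_neg, inv_le_comm₀ (Real.exp_pos _) (by positivity), inv_div]
      exact key
    have habs : x ^ 4 = |x| ^ 4 := by
      rw [← abs_pow, abs_of_nonneg hx.le]
    have hstep : |x| ^ m * (m.factorial / (c * x ^ 4) ^ m) ≤ m.factorial / c ^ m := by
      rw [habs, mul_pow, ← pow_mul, mul_div_assoc', div_le_div_iff₀ (by positivity) (by positivity)]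
      have hmono : |x| ^ m * (m.factorial * c ^ m) ≤ |x| ^ (4 * m) * (m.factorial * c ^ m) := by
        apply mul_le_mul_of_nonneg_right _ (by positivity)
        exact pow_le_pow_right₀ h.le (by omega)
      calc |x| ^ m * m.factorial * c ^ m = |x| ^ m * (m.factorial * c ^ m) := by ring
        _ ≤ |x| ^ (4 * m) * (m.factorial * c ^ m) := hmono
        _ = ↑m.factorial * (c ^ m * |x| ^ (4 * m)) := by ring
    calc |x| ^ m * Real.exp (-(c * x ^ 4))
        ≤ |x| ^ m * (m.factorial / (c * x ^ 4) ^ m) :=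
          mul_le_mul_of_nonneg_left h2 (by positivity)
      _ ≤ m.factorial / c ^ m := hstep

lemma qexp_decay (c : ℝ) (hc : 0 < c) (k n : ℕ) :
    ∃ C, ∀ x : ℝ, |x| ^ k * |iteratedDeriv n (fun x : ℝ => Real.exp (-(c * x ^ 4))) x| ≤ C := by
  obtain ⟨P, hP⟩ := iteratedDeriv_qexp c n
  choose Cb hCb using fun m => pow_mul_qexp_le c hc m
  refine ⟨∑ i ∈ Finset.range (P.natDegree + 1), |P.coeff i| * Cb (k + i), fun x => ?_⟩
  rw [hP x, abs_mul, abs_of_pos (Real.exp_pos _)]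
  have hPx : |P.eval x| ≤ ∑ i ∈ Finset.range (P.natDegree + 1), |P.coeff i| * |x| ^ i := by
    rw [Polynomial.eval_eq_sum_range]
    exact (Finset.abs_sum_le_sum_abs _ _).trans (le_of_eq (by simp [abs_mul, abs_pow]))
  have hE : (0:ℝ) ≤ Real.exp (-(c * x ^ 4)) := (Real.exp_pos _).le
  calc |x| ^ k * (|P.eval x| * Real.exp (-(c * x ^ 4)))
      ≤ |x| ^ k * ((∑ i ∈ Finset.range (P.natDegree + 1), |P.coeff i| * |x| ^ i)
          * Real.exp (-(c * x ^ 4))) := by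
        apply mul_le_mul_of_nonneg_left _ (by positivity)
        exact mul_le_mul_of_nonneg_right hPx hE
    _ = ∑ i ∈ Finset.range (P.natDegree + 1),
          |P.coeff i| * (|x| ^ (k + i) * Real.exp (-(c * x ^ 4))) := by
        rw [Finset.sum_mul, Finset.mul_sum]
        refine Finset.sum_congr rfl fun i _ => ?_
        rw [pow_add]; ring
    _ ≤ ∑ i ∈ Finset.range (P.natDegree + 1), |P.coeff i| * Cb (k + i) :=
        Finset.sum_le_sum fun i _ =>
          mul_le_mul_of_nonneg_left (hCb (k + i) x) (abs_nonneg _)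

/-- `exp (-(c x^4))` as a complex-valued Schwartz function. -/
noncomputable def qexpSchwartz (c : ℝ) (hc : 0 < c) : SchwartzMap ℝ ℂ where
  toFun := fun x => (Real.exp (-(c * x ^ 4)) : ℂ)
  smooth' := Complex.ofRealCLM.contDiff.comp (contDiff_qexp c)
  decay' := by
    intro k n
    obtain ⟨C, hC⟩ := qexp_decay c hc k n
    refine ⟨C, fun x => ?_⟩
    have hnorm : ‖iteratedFDeriv ℝ n (fun x : ℝ => (Real.exp (-(c * x ^ 4)) : ℂ)) x‖
        = ‖iteratedFDeriv ℝ n (fun x : ℝ => Real.exp (-(c * x ^ 4))) x‖ := by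
      have := (RCLike.ofRealLI (K := ℂ)).norm_iteratedFDeriv_comp_left
        (contDiff_qexp c).contDiffAt (x := x) (i := n) (by exact_mod_cast le_top)
      simpa [Function.comp_def, RCLike.ofRealLI_apply] using this
    rw [Real.norm_eq_abs, hnorm, norm_iteratedFDeriv_eq_norm_iteratedDeriv, Real.norm_eq_abs]
    exact hC x

lemma qexpSchwartz_apply (c : ℝ) (hc : 0 < c) (x : ℝ) :
    qexpSchwartz c hc x = (Real.exp (-(c * x ^ 4)) : ℂ) := rfl

/-- For every `T > 0` and every real `K`, the spatial Fourier transform of the Green's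
function equals the decaying quartic exponential:
`∫ X, G(X,T) exp(−iKX) dX = exp(−K⁴ T)`. -/
theorem greenFn_fourier_transform (T : ℝ) (hT : 0 < T) (K : ℝ) :
    ∫ X : ℝ, (greenFn X T : ℂ) * Complex.exp (-Complex.I * (K : ℂ) * (X : ℂ)) =
      (Real.exp (-K ^ 4 * T) : ℂ) := by
  have hc : 0 < (2 * π) ^ 4 * T := by positivity
  set c := (2 * π) ^ 4 * T with hcdef
  set ψ := qexpSchwartz c hc with hψ
  set r : ℝ → ℝ := fun v => Real.exp (-(c * v ^ 4)) with hrdef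
  have hrInt : Integrable r := by
    have h := (ψ.integrable (μ := volume)).re
    apply h.congr
    filter_upwards with v
    rw [hψ, qexpSchwartz_apply]
    simp only [RCLike.re_to_complex, Complex.ofReal_re, hrdef]
  have hGeq : ∀ X : ℝ, (greenFn X T : ℂ) = FourierTransformInv.fourierInv (⇑ψ) X := by
    intro X
    have hcos : Integrable fun v : ℝ => r v * Real.cos (2 * π * v * X) := by
      have hb : ∀ v : ℝ, ‖Real.cos (2 * π * v * X)‖ ≤ 1 := fun v => by
        rw [Real.norm_eq_abs]; exact Real.abs_cos_le_one _
      have := hrInt.bdd_mul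
        ((Real.continuous_cos.comp
          ((continuous_const.mul continuous_id).mul continuous_const)).aestronglyMeasurable)
        (ae_of_all _ hb)
      simpa [mul_comm] using this
    have hsin : Integrable fun v : ℝ => r v * Real.sin (2 * π * v * X) := by
      have hb : ∀ v : ℝ, ‖Real.sin (2 * π * v * X)‖ ≤ 1 := fun v => by
        rw [Real.norm_eq_abs]; exact Real.abs_sin_le_one _
      have := hrInt.bdd_mul
        ((Real.continuous_sin.comp
          ((continuous_const.mul continuous_id).mul continuous_const)).aestronglyMeasurable)
        (ae_of_all _ hb)
      simpa [mul_comm] using this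
    have hpt : ∀ v : ℝ, (fun v : ℝ => r v * Real.sin (2 * π * v * X)) (-1 * v)
        = -(r v * Real.sin (2 * π * v * X)) := by
      intro v
      have h4 : ((-1 : ℝ) * v) ^ 4 = v ^ 4 := by ring
      have hs : Real.sin (2 * π * (-1 * v) * X) = -Real.sin (2 * π * v * X) := by
        rw [show 2 * π * ((-1 : ℝ) * v) * X = -(2 * π * v * X) by ring, Real.sin_neg]
      simp only [hrdef, h4, hs]
      ring
    have hsin0 : ∫ v : ℝ, r v * Real.sin (2 * π * v * X) = 0 := by
      have h2 : ∫ v : ℝ, r v * Real.sin (2 * π * v * X)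
          = -∫ v : ℝ, r v * Real.sin (2 * π * v * X) := by
        calc ∫ v : ℝ, r v * Real.sin (2 * π * v * X)
            = |((-1 : ℝ))⁻¹| • ∫ v : ℝ, r v * Real.sin (2 * π * v * X) := by norm_num
          _ = ∫ v : ℝ, (fun v : ℝ => r v * Real.sin (2 * π * v * X)) (-1 * v) :=
              (Measure.integral_comp_mul_left (fun v : ℝ => r v * Real.sin (2 * π * v * X)) (-1)).symm
          _ = ∫ v : ℝ, -(r v * Real.sin (2 * π * v * X)) := by simp only [hpt]
          _ = -∫ v : ℝ, r v * Real.sin (2 * π * v * X) := integral_neg _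
      linarith
    have hexp : ∀ v : ℝ, Complex.exp (((-2 * π * v * (-X) : ℝ) : ℂ) * Complex.I) • (ψ v)
        = ((r v * Real.cos (2 * π * v * X) : ℝ) : ℂ)
          + ((r v * Real.sin (2 * π * v * X) : ℝ) : ℂ) * Complex.I := by
      intro v
      rw [hψ, qexpSchwartz_apply, smul_eq_mul]
      rw [show (-2 * π * v * (-X) : ℝ) = 2 * π * v * X by ring]
      rw [Complex.exp_mul_I, ← Complex.ofReal_cos, ← Complex.ofReal_sin]
      push_cast [hrdef]
      ring
    have hinv : FourierTransformInv.fourierInv (⇑ψ) X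
        = (((∫ v : ℝ, r v * Real.cos (2 * π * v * X) : ℝ)) : ℂ)
          + (((∫ v : ℝ, r v * Real.sin (2 * π * v * X) : ℝ)) : ℂ) * Complex.I := by
      rw [Real.fourierInv_eq_fourier_neg,
        Real.fourier_real_eq_integral_exp_smul]
      calc ∫ v : ℝ, Complex.exp (((-2 * π * v * (-X) : ℝ) : ℂ) * Complex.I) • (ψ v)
          = ∫ v : ℝ, (((r v * Real.cos (2 * π * v * X) : ℝ) : ℂ)
              + ((r v * Real.sin (2 * π * v * X) : ℝ) : ℂ) * Complex.I) :=
            integral_congr_ae (ae_of_all _ hexp)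
        _ = (((∫ v : ℝ, r v * Real.cos (2 * π * v * X) : ℝ)) : ℂ)
              + (((∫ v : ℝ, r v * Real.sin (2 * π * v * X) : ℝ)) : ℂ) * Complex.I := by
            have hci : Integrable (fun v : ℝ => ((r v * Real.cos (2 * π * v * X) : ℝ) : ℂ)) :=
              hcos.ofReal
            have hsi : Integrable (fun v : ℝ => ((r v * Real.sin (2 * π * v * X) : ℝ) : ℂ)) :=
              hsin.ofReal
            rw [integral_add hci (hsi.mul_const Complex.I)]
            congr 1
            · exact integral_ofReal
            · have e1 : ∫ v : ℝ, ((r v * Real.sin (2 * π * v * X) : ℝ) : ℂ) * Complex.I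
                  = (∫ v : ℝ, ((r v * Real.sin (2 * π * v * X) : ℝ) : ℂ)) * Complex.I := by
                simpa [smul_eq_mul] using integral_smul_const (μ := volume)
                  (fun v : ℝ => ((r v * Real.sin (2 * π * v * X) : ℝ) : ℂ)) Complex.I
              rw [e1]
              congr 1
              exact integral_ofReal
    have hreal : ∫ v : ℝ, r v * Real.cos (2 * π * v * X) = greenFn X T := by
      have hkey := Measure.integral_comp_mul_left
        (fun k : ℝ => Real.exp (-k ^ 4 * T) * Real.cos (k * X)) (2 * π)
      have hfun : (fun x : ℝ => Real.exp (-(2 * π * x) ^ 4 * T) * Real.cos (2 * π * x * X))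
          = fun v : ℝ => r v * Real.cos (2 * π * v * X) := by
        funext v
        rw [show (-(2 * π * v) ^ 4 * T : ℝ) = -(c * v ^ 4) by rw [hcdef]; ring]
      have h2π : |((2 * π : ℝ))⁻¹| = (2 * π)⁻¹ := abs_of_pos (by positivity)
      rw [greenFn, ← hfun]
      rw [show (fun x : ℝ => Real.exp (-(2 * π * x) ^ 4 * T) * Real.cos (2 * π * x * X))
          = fun x : ℝ => (fun k : ℝ => Real.exp (-k ^ 4 * T) * Real.cos (k * X)) (2 * π * x)
          from rfl]
      rw [hkey, h2π, smul_eq_mul, one_div]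
    rw [hinv, hsin0, hreal]
    simp
  have hπC : (π : ℂ) ≠ 0 := by exact_mod_cast Real.pi_ne_zero
  calc (∫ X : ℝ, (greenFn X T : ℂ) * Complex.exp (-Complex.I * (K : ℂ) * (X : ℂ)))
      = ∫ X : ℝ, Complex.exp (((-2 * π * X * (K / (2 * π)) : ℝ) : ℂ) * Complex.I)
          • FourierTransformInv.fourierInv (⇑ψ) X := by
        refine integral_congr_ae (ae_of_all _ fun X => ?_)
        dsimp only
        rw [hGeq X, smul_eq_mul,
          show ((-2 * π * X * (K / (2 * π)) : ℝ) : ℂ) * Complex.I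
              = -Complex.I * (K : ℂ) * (X : ℂ) by
            push_cast
            field_simp]
        ring
    _ = FourierTransform.fourier (FourierTransformInv.fourierInv (⇑ψ)) (K / (2 * π)) :=
        (Real.fourier_real_eq_integral_exp_smul _ _).symm
    _ = (Real.exp (-K ^ 4 * T) : ℂ) := by
        have h1 : FourierTransformInv.fourierInv (⇑ψ)
            = ⇑((FourierTransform.fourierCLE ℝ (SchwartzMap ℝ ℂ)).symm ψ) := by
          rw [FourierTransform.fourierCLE_symm_apply]; exact (SchwartzMap.fourierInv_coe ψ).symm
        rw [h1]
        have h2 : FourierTransform.fourier (⇑((FourierTransform.fourierCLE ℝ (SchwartzMap ℝ ℂ)).symm ψ))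
            (K / (2 * π)) = ψ (K / (2 * π)) := by
          rw [FourierTransform.fourierCLE_symm_apply, ← SchwartzMap.fourier_coe,
            FourierTransform.fourier_fourierInv_eq]
        rw [h2, hψ, qexpSchwartz_apply]
        norm_cast
        rw [show (-(c * (K / (2 * π)) ^ 4) : ℝ) = -K ^ 4 * T by rw [hcdef]; field_simp]
end

section
/- The Green's function is the point-source solution: for every bounded continuous function f : ℝ → ℝ, lim_{T→0⁺} ∫_ℝ G(X,T) f(X) dX = f(0); that is, G(·,T) converges to the Dirac distribution as T → 0⁺. -/
open MeasureTheory Real Filter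

open FourierTransform


-- |x|^m ≤ 2^m m! exp(x^4/2)
lemma abs_pow_le_exp (m : ℕ) (x : ℝ) :
    |x| ^ m ≤ (2 ^ m * m.factorial) * Real.exp (x ^ 4 / 2) := by
  have hfac : (1:ℝ) ≤ 2 ^ m * m.factorial := by
    have : (1:ℝ) ≤ (2:ℝ) ^ m := one_le_pow₀ one_le_two
    have h2 : (1:ℝ) ≤ (m.factorial : ℝ) := by exact_mod_cast m.factorial_pos
    nlinarith
  rcases le_or_gt (|x|) 1 with h | h
  · calc |x| ^ m ≤ 1 := pow_le_one₀ (abs_nonneg x) h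
    _ ≤ (2 ^ m * m.factorial) * Real.exp (x ^ 4 / 2) := by
        nlinarith [Real.one_le_exp (by positivity : (0:ℝ) ≤ x ^ 4 / 2)]
  · have hx4 : (x ^ 4 / 2) ^ m / m.factorial ≤ Real.exp (x ^ 4 / 2) := by
      have := Real.sum_le_exp_of_nonneg (by positivity : (0:ℝ) ≤ x ^ 4 / 2) (m + 1)
      refine le_trans ?_ this
      exact Finset.single_le_sum (f := fun i => (x ^ 4 / 2) ^ i / i.factorial)
        (fun i _ => by positivity) (Finset.self_mem_range_succ m)
    have h1 : |x| ^ m ≤ (x ^ 4) ^ m := by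
      have : |x| ≤ x ^ 4 := by
        have h4 : |x| ≤ |x| ^ 4 := le_self_pow₀ h.le (by norm_num)
        have : |x| ^ 4 = x ^ 4 := by rw [← _root_.abs_pow]; exact abs_of_nonneg (by positivity)
        linarith
      exact pow_le_pow_left₀ (abs_nonneg x) this m
    calc |x| ^ m ≤ (x ^ 4) ^ m := h1
    _ = (2:ℝ) ^ m * ((x ^ 4 / 2) ^ m) := by rw [div_pow, mul_div_cancel₀]; positivity
    _ ≤ (2:ℝ) ^ m * (m.factorial * Real.exp (x ^ 4 / 2)) := by
        have hf : (0:ℝ) < m.factorial := by exact_mod_cast m.factorial_pos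
        have h2 := (div_le_iff₀ hf).mp hx4
        nlinarith [h2, (by positivity : (0:ℝ) ≤ (2:ℝ)^m)]
    _ = (2 ^ m * m.factorial) * Real.exp (x ^ 4 / 2) := by ring

lemma integrable_exp_neg_quartic_half : Integrable (fun x : ℝ => Real.exp (-(x ^ 4) / 2)) := by
  apply Integrable.mono' ((integrable_exp_neg_mul_sq (by norm_num : (0:ℝ) < 1/2)).const_mul
    (Real.exp (1/2)))
  · exact (Real.continuous_exp.comp (((continuous_pow 4).neg).div_const 2)).aestronglyMeasurable
  · filter_upwards with x
    rw [Real.norm_eq_abs, abs_of_nonneg (Real.exp_pos _).le, ← Real.exp_add]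
    apply Real.exp_le_exp.mpr
    nlinarith [sq_nonneg (x ^ 2 - 1)]

lemma integrable_abs_pow_mul (m : ℕ) :
    Integrable (fun x : ℝ => |x| ^ m * Real.exp (-(x ^ 4))) := by
  apply Integrable.mono' (integrable_exp_neg_quartic_half.const_mul (2 ^ m * m.factorial))
  · exact ((continuous_abs.pow m).mul
      (Real.continuous_exp.comp ((continuous_pow 4).neg))).aestronglyMeasurable
  · filter_upwards with x
    rw [Real.norm_eq_abs, abs_of_nonneg (by positivity)]
    have h := abs_pow_le_exp m x
    have he : Real.exp (-(x ^ 4)) = Real.exp (x ^ 4 / 2) * Real.exp (-(x^4)/2) / Real.exp (x^4) := by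
      rw [← Real.exp_add, ← Real.exp_sub]; ring_nf
    calc |x| ^ m * Real.exp (-(x ^ 4))
        ≤ ((2 ^ m * m.factorial) * Real.exp (x ^ 4 / 2)) * Real.exp (-(x ^ 4)) := by
          exact mul_le_mul_of_nonneg_right h (Real.exp_pos _).le
    _ = (2 ^ m * m.factorial) * (Real.exp (x ^ 4 / 2 + -(x ^ 4))) := by
          rw [Real.exp_add]; ring
    _ ≤ (2 ^ m * m.factorial) * Real.exp (-(x ^ 4) / 2) := by
          apply mul_le_mul_of_nonneg_left _ (by positivity)
          exact Real.exp_le_exp.mpr (by linarith)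
    _ = _ := rfl

/-- The quartic "heat kernel" profile as a complex function. -/
noncomputable def Wfn (k : ℝ) : ℂ := (Real.exp (-(k ^ 4)) : ℝ)

noncomputable def Wfn1 (k : ℝ) : ℂ := ((-(4 * k ^ 3)) * Real.exp (-(k ^ 4)) : ℝ)

noncomputable def Wfn2 (k : ℝ) : ℂ := ((16 * k ^ 6 - 12 * k ^ 2) * Real.exp (-(k ^ 4)) : ℝ)

lemma hasDerivAt_Wfn (k : ℝ) : HasDerivAt Wfn (Wfn1 k) k := by
  have h : HasDerivAt (fun x : ℝ => Real.exp (-(x ^ 4)))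
      ((-(4 * k ^ 3)) * Real.exp (-(k ^ 4))) k := by
    have h1 : HasDerivAt (fun x : ℝ => -(x ^ 4)) (-(4 * k ^ 3)) k := by
      simpa using (hasDerivAt_pow 4 k).fun_neg
    simpa [mul_comm] using h1.exp
  exact h.ofReal_comp

lemma hasDerivAt_Wfn1 (k : ℝ) : HasDerivAt Wfn1 (Wfn2 k) k := by
  have h1 : HasDerivAt (fun x : ℝ => -(x ^ 4)) (-(4 * k ^ 3)) k := by
    simpa using (hasDerivAt_pow 4 k).fun_neg
  have h2 : HasDerivAt (fun x : ℝ => -(4 * x ^ 3)) (-(12 * k ^ 2)) k := by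
    have := ((hasDerivAt_pow 3 k).const_mul (4:ℝ)).fun_neg
    exact this.congr_deriv (by ring)
  have h : HasDerivAt (fun x : ℝ => (-(4 * x ^ 3)) * Real.exp (-(x ^ 4)))
      ((16 * k ^ 6 - 12 * k ^ 2) * Real.exp (-(k ^ 4))) k := by
    have := h2.fun_mul (h1.exp)
    exact this.congr_deriv (by ring)
  exact h.ofReal_comp

lemma integrable_Wfn : Integrable Wfn := by
  have h := integrable_abs_pow_mul 0
  simp only [pow_zero, one_mul] at h
  exact h.ofReal

lemma integrable_Wfn1 : Integrable Wfn1 := by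
  apply Integrable.ofReal
  apply Integrable.mono' ((integrable_abs_pow_mul 3).const_mul 4)
  · exact (((continuous_const.mul (continuous_pow 3)).neg).mul
      (Real.continuous_exp.comp ((continuous_pow 4).neg))).aestronglyMeasurable
  · filter_upwards with x
    show |(-(4 * x ^ 3)) * Real.exp (-(x ^ 4))| ≤ 4 * (|x| ^ 3 * Real.exp (-(x ^ 4)))
    rw [abs_mul, abs_of_nonneg (Real.exp_pos _).le]
    have : |(-(4 * x ^ 3))| = 4 * |x| ^ 3 := by
      rw [abs_neg, abs_mul, abs_pow]; norm_num
    rw [this]; ring_nf; exact le_refl _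

lemma integrable_Wfn2 : Integrable Wfn2 := by
  apply Integrable.ofReal
  apply Integrable.mono'
    (((integrable_abs_pow_mul 6).const_mul 16).add ((integrable_abs_pow_mul 2).const_mul 12))
  · exact (((continuous_const.mul (continuous_pow 6)).sub
      (continuous_const.mul (continuous_pow 2))).mul
      (Real.continuous_exp.comp ((continuous_pow 4).neg))).aestronglyMeasurable
  · filter_upwards with x
    show |(16 * x ^ 6 - 12 * x ^ 2) * Real.exp (-(x ^ 4))| ≤
      16 * (|x| ^ 6 * Real.exp (-(x ^ 4))) + 12 * (|x| ^ 2 * Real.exp (-(x ^ 4)))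
    rw [abs_mul, abs_of_nonneg (Real.exp_pos _).le]
    have h1 : |16 * x ^ 6 - 12 * x ^ 2| ≤ 16 * |x| ^ 6 + 12 * |x| ^ 2 := by
      refine (abs_sub _ _).trans ?_
      rw [abs_mul, abs_mul, abs_pow, abs_pow]; norm_num
    have := mul_le_mul_of_nonneg_right h1 (Real.exp_pos (-(x^4))).le
    calc |16 * x ^ 6 - 12 * x ^ 2| * Real.exp (-(x ^ 4))
        ≤ (16 * |x| ^ 6 + 12 * |x| ^ 2) * Real.exp (-(x ^ 4)) := this
    _ = 16 * (|x| ^ 6 * Real.exp (-(x ^ 4))) + 12 * (|x| ^ 2 * Real.exp (-(x ^ 4))) := by ring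

open FourierTransform in
lemma continuous_fourier_Wfn : Continuous (𝓕 Wfn) := by
  apply VectorFourier.fourierIntegral_continuous Real.continuous_fourierChar
    (by exact continuous_inner) integrable_Wfn

open FourierTransform Complex in
lemma fourier_Wfn2_eq :
    𝓕 Wfn2 = fun ξ : ℝ => ((2 * π * I * ξ) * (2 * π * I * ξ)) • 𝓕 Wfn ξ := by
  have hder : deriv Wfn = Wfn1 := funext fun k => (hasDerivAt_Wfn k).deriv
  have hdiff : Differentiable ℝ Wfn := fun k => (hasDerivAt_Wfn k).differentiableAt
  have hder1 : deriv Wfn1 = Wfn2 := funext fun k => (hasDerivAt_Wfn1 k).deriv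
  have hdiff1 : Differentiable ℝ Wfn1 := fun k => (hasDerivAt_Wfn1 k).differentiableAt
  have h1 : 𝓕 Wfn1 = fun ξ : ℝ => (2 * π * I * ξ) • 𝓕 Wfn ξ := by
    rw [← hder]
    exact Real.fourier_deriv integrable_Wfn hdiff (hder ▸ integrable_Wfn1)
  have h2 : 𝓕 Wfn2 = fun ξ : ℝ => (2 * π * I * ξ) • 𝓕 Wfn1 ξ := by
    rw [← hder1]
    exact Real.fourier_deriv integrable_Wfn1 hdiff1 (hder1 ▸ integrable_Wfn2)
  rw [h2, h1]
  funext ξ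
  rw [smul_smul]

open FourierTransform Complex in
lemma norm_fourier_Wfn_bound :
    ∃ C : ℝ, ∀ ξ : ℝ, ‖𝓕 Wfn ξ‖ ≤ C * (1 + ξ ^ 2)⁻¹ := by
  set B0 : ℝ := ∫ x : ℝ, ‖Wfn x‖ with hB0
  set B2 : ℝ := ∫ x : ℝ, ‖Wfn2 x‖ with hB2
  have hB0n : 0 ≤ B0 := integral_nonneg fun x => norm_nonneg _
  have hB2n : 0 ≤ B2 := integral_nonneg fun x => norm_nonneg _
  have hb0 : ∀ ξ : ℝ, ‖𝓕 Wfn ξ‖ ≤ B0 := fun ξ =>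
    VectorFourier.norm_fourierIntegral_le_integral_norm _ _ _ _ _
  have hb2 : ∀ ξ : ℝ, ‖𝓕 Wfn2 ξ‖ ≤ B2 := fun ξ =>
    VectorFourier.norm_fourierIntegral_le_integral_norm _ _ _ _ _
  have hπ : (0:ℝ) < π := Real.pi_pos
  set D : ℝ := B2 / (2 * π ^ 2) with hDdef
  have hDn : 0 ≤ D := div_nonneg hB2n (by positivity)
  have hD : D * (2 * π ^ 2) = B2 := div_mul_cancel₀ _ (by positivity)
  refine ⟨2 * B0 + D, fun ξ => ?_⟩
  have hpos : (0:ℝ) < 1 + ξ ^ 2 := by positivity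
  rcases le_or_gt (|ξ|) 1 with h | h
  · have h2 : 1 + ξ ^ 2 ≤ 2 := by
      nlinarith [_root_.sq_abs ξ, mul_le_mul h h (abs_nonneg ξ) zero_le_one]
    refine (hb0 ξ).trans ?_
    rw [← div_eq_mul_inv, le_div_iff₀ hpos]
    nlinarith
  · have hsq : 1 ≤ ξ ^ 2 := by nlinarith [_root_.sq_abs ξ]
    have key : ‖𝓕 Wfn2 ξ‖ = (2 * π * |ξ|) ^ 2 * ‖𝓕 Wfn ξ‖ := by
      rw [fourier_Wfn2_eq]
      simp only [norm_smul, norm_mul]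
      have h1 : ‖(2:ℂ)‖ = 2 := by norm_num
      have h2 : ‖(π:ℂ)‖ = π := by
        rw [Complex.norm_real, Real.norm_eq_abs, abs_of_pos hπ]
      have h3 : ‖(ξ:ℂ)‖ = |ξ| := by rw [Complex.norm_real, Real.norm_eq_abs]
      rw [h1, h2, h3, Complex.norm_I]
      ring
    have h1 : ‖𝓕 Wfn ξ‖ ≤ B2 / ((2 * π * |ξ|) ^ 2) := by
      rw [le_div_iff₀ (by positivity)]
      calc ‖𝓕 Wfn ξ‖ * (2 * π * |ξ|) ^ 2 = (2 * π * |ξ|) ^ 2 * ‖𝓕 Wfn ξ‖ := by ring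
      _ = ‖𝓕 Wfn2 ξ‖ := key.symm
      _ ≤ B2 := hb2 ξ
    refine h1.trans ?_
    rw [← div_eq_mul_inv, div_le_div_iff₀ (by positivity) hpos]
    have habs : (2 * π * |ξ|) ^ 2 = 4 * π ^ 2 * ξ ^ 2 := by
      rw [mul_pow, mul_pow, _root_.sq_abs]; ring
    rw [habs]
    nlinarith [mul_nonneg (mul_nonneg hB0n (sq_nonneg π)) (sq_nonneg ξ)]

open FourierTransform in
lemma integrable_fourier_Wfn : Integrable (𝓕 Wfn) := by
  obtain ⟨C, hC⟩ := norm_fourier_Wfn_bound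
  apply Integrable.mono' (integrable_inv_one_add_sq.const_mul C)
    continuous_fourier_Wfn.aestronglyMeasurable
  filter_upwards with ξ using hC ξ

open FourierTransform in
lemma integral_fourier_Wfn : ∫ ξ : ℝ, 𝓕 Wfn ξ = 1 := by
  have hcont : Continuous Wfn := by
    exact Complex.continuous_ofReal.comp (Real.continuous_exp.comp ((continuous_pow 4).neg))
  have hinv := hcont.fourierInv_fourier_eq integrable_Wfn integrable_fourier_Wfn
  have h0 : 𝓕⁻ (𝓕 Wfn) 0 = Wfn 0 := by rw [hinv]
  have hW0 : Wfn 0 = 1 := by simp [Wfn]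
  rw [← hW0, ← h0]
  simp [Real.fourierInv_eq]

/-- The self-similar profile. -/
noncomputable def auxKernel (y : ℝ) : ℝ :=
  (1 / (2 * Real.pi)) * ∫ k : ℝ, Real.exp (-k ^ 4) * Real.cos (k * y)

open FourierTransform Complex in
lemma cos_integral_eq (y : ℝ) :
    ∫ k : ℝ, Real.exp (-k ^ 4) * Real.cos (k * y) = (𝓕 Wfn (y / (2 * π))).re := by
  have hπ : (0:ℝ) < π := Real.pi_pos
  rw [Real.fourier_real_eq]
  have hint : Integrable (fun v : ℝ => 𝐞 (-(v * (y / (2 * π)))) • Wfn v) := by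
    have := (Real.fourierIntegral_convergent_iff (f := Wfn)
      (μ := volume) (y / (2 * π))).mpr integrable_Wfn
    simpa [RCLike.inner_apply, conj_trivial, mul_comm] using this
  rw [show (∫ (v : ℝ), 𝐞 (-(v * (y / (2 * π)))) • Wfn v).re
      = RCLike.re (∫ (v : ℝ), 𝐞 (-(v * (y / (2 * π)))) • Wfn v) from rfl,
    ← integral_re hint]
  congr 1
  funext k
  rw [RCLike.re_to_complex]
  have harg : (𝐞 (-(k * (y / (2 * π)))) : ℂ) = Complex.exp (((-(k * y) : ℝ) : ℂ) * Complex.I) := by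
    rw [Real.fourierChar_apply]
    have hπc : (π:ℂ) ≠ 0 := by exact_mod_cast hπ.ne'
    congr 1
    push_cast
    field_simp
  rw [Circle.smul_def, harg]
  show _ = (_ * ((Real.exp (-(k ^ 4)) : ℝ) : ℂ)).re
  rw [Complex.mul_re, Complex.ofReal_re, Complex.ofReal_im, Complex.exp_ofReal_mul_I_re,
    mul_zero, sub_zero, Real.cos_neg, mul_comm]

open FourierTransform in
lemma auxKernel_eq : auxKernel = fun y => (1 / (2 * π)) * (𝓕 Wfn (y * (2 * π)⁻¹)).re := by
  funext y
  rw [auxKernel, cos_integral_eq, div_eq_mul_inv y]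

open FourierTransform in
lemma continuous_auxKernel : Continuous auxKernel := by
  rw [auxKernel_eq]
  exact continuous_const.mul (Complex.continuous_re.comp
    (continuous_fourier_Wfn.comp (continuous_id.mul continuous_const)))

open FourierTransform in
lemma integrable_auxKernel : Integrable auxKernel := by
  rw [auxKernel_eq]
  have h1 : Integrable (fun y : ℝ => 𝓕 Wfn (y * (2 * π)⁻¹)) :=
    integrable_fourier_Wfn.comp_mul_right' (inv_ne_zero (by positivity : (2*π) ≠ 0))
  exact (h1.re).const_mul _

open FourierTransform in
lemma integral_auxKernel : ∫ y : ℝ, auxKernel y = 1 := by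
  have hπ : (0:ℝ) < π := Real.pi_pos
  rw [auxKernel_eq, MeasureTheory.integral_const_mul]
  have h2 : ∫ y : ℝ, (𝓕 Wfn (y * (2 * π)⁻¹)).re
      = |((2 * π)⁻¹)⁻¹| • ∫ ξ : ℝ, (𝓕 Wfn ξ).re :=
    MeasureTheory.Measure.integral_comp_mul_right (fun ξ => (𝓕 Wfn ξ).re) ((2 * π)⁻¹)
  rw [h2]
  have h3 : ∫ ξ : ℝ, (𝓕 Wfn ξ).re = 1 := by
    have := integral_re integrable_fourier_Wfn
    rw [integral_fourier_Wfn] at this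
    simpa using this
  rw [h3, inv_inv, abs_of_pos (by positivity : (0:ℝ) < 2 * π)]
  simp only [smul_eq_mul, mul_one]
  field_simp

lemma greenFn_scaled {T : ℝ} (hT : 0 < T) (y : ℝ) :
    greenFn (T ^ ((4:ℝ))⁻¹ * y) T = (T ^ ((4:ℝ))⁻¹)⁻¹ * auxKernel y := by
  set a := T ^ ((4:ℝ))⁻¹ with hadef
  have ha : 0 < a := Real.rpow_pos_of_pos hT _
  have ha4 : a ^ 4 = T := by
    rw [hadef, ← Real.rpow_natCast (T ^ ((4:ℝ))⁻¹) 4, ← Real.rpow_mul hT.le]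
    norm_num
  have key : ∀ K : ℝ, Real.exp (-K ^ 4 * T) * Real.cos (K * (a * y)) =
      (fun u => Real.exp (-u ^ 4) * Real.cos (u * y)) (a * K) := by
    intro K
    simp only
    congr 1
    · congr 1
      rw [mul_pow, ha4]; ring
    · congr 1; ring
  rw [greenFn]
  simp_rw [key]
  rw [MeasureTheory.Measure.integral_comp_mul_left (fun u => Real.exp (-u ^ 4) * Real.cos (u * y)) a]
  rw [abs_of_pos (inv_pos.mpr ha), smul_eq_mul, auxKernel]
  have : ∀ u : ℝ, Real.exp (-u ^ 4) = Real.exp (-(u ^ 4)) := fun u => by ring_nf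
  ring

lemma integral_greenFn_mul {T : ℝ} (hT : 0 < T) (f : ℝ → ℝ) :
    ∫ X : ℝ, greenFn X T * f X = ∫ y : ℝ, auxKernel y * f (T ^ ((4:ℝ))⁻¹ * y) := by
  set a := T ^ ((4:ℝ))⁻¹ with hadef
  have ha : 0 < a := Real.rpow_pos_of_pos hT _
  have h1 := MeasureTheory.Measure.integral_comp_mul_left (fun X => greenFn X T * f X) a
  simp_rw [show ∀ y, greenFn (a * y) T = a⁻¹ * auxKernel y from greenFn_scaled hT] at h1
  rw [abs_of_pos (inv_pos.mpr ha), smul_eq_mul] at h1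
  have h2 : ∫ y : ℝ, a⁻¹ * auxKernel y * f (a * y)
      = a⁻¹ * ∫ y : ℝ, auxKernel y * f (a * y) := by
    rw [← MeasureTheory.integral_const_mul]
    congr 1; funext y; ring
  rw [h2] at h1
  have := mul_left_cancel₀ (inv_ne_zero ha.ne') h1
  exact this.symm

/-- The Green's function is the point-source solution: for every bounded continuous
`f : ℝ → ℝ`, `lim_{T→0⁺} ∫ X, G(X,T) f(X) dX = f(0)`, i.e. `G(·,T)` converges to the
Dirac distribution as `T → 0⁺`. -/
theorem greenFn_dirac_limit (f : ℝ → ℝ) (hf_cont : Continuous f)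
    (hf_bdd : ∃ C : ℝ, ∀ x : ℝ, |f x| ≤ C) :
    Tendsto (fun T : ℝ => ∫ X : ℝ, greenFn X T * f X)
      (nhdsWithin 0 (Set.Ioi 0)) (nhds (f 0)) := by
  obtain ⟨C, hC⟩ := hf_bdd
  have hC0 : 0 ≤ C := (abs_nonneg (f 0)).trans (hC 0)
  have hroot : Tendsto (fun T : ℝ => T ^ ((4:ℝ))⁻¹) (nhdsWithin 0 (Set.Ioi 0)) (nhds 0) := by
    have h1 : ContinuousAt (fun x : ℝ => x ^ ((4:ℝ))⁻¹) 0 :=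
      Real.continuousAt_rpow_const 0 ((4:ℝ))⁻¹ (Or.inr (by norm_num))
    have h2 := h1.tendsto.mono_left (nhdsWithin_le_nhds (s := Set.Ioi (0:ℝ)))
    rwa [Real.zero_rpow (by norm_num : ((4:ℝ))⁻¹ ≠ 0)] at h2
  have key : Tendsto (fun T : ℝ => ∫ y : ℝ, auxKernel y * f (T ^ ((4:ℝ))⁻¹ * y))
      (nhdsWithin 0 (Set.Ioi 0)) (nhds (∫ y : ℝ, auxKernel y * f 0)) := by
    apply tendsto_integral_filter_of_dominated_convergence (fun y => |auxKernel y| * C)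
    · filter_upwards with T
      exact (continuous_auxKernel.mul
        (hf_cont.comp (continuous_const.mul continuous_id))).aestronglyMeasurable
    · filter_upwards with T
      filter_upwards with y
      rw [Real.norm_eq_abs, abs_mul]
      exact mul_le_mul_of_nonneg_left (hC _) (abs_nonneg _)
    · exact integrable_auxKernel.abs.mul_const C
    · filter_upwards with y
      have h1 : Tendsto (fun T : ℝ => T ^ ((4:ℝ))⁻¹ * y) (nhdsWithin 0 (Set.Ioi 0))
          (nhds 0) := by
        have := hroot.mul_const y
        rwa [zero_mul] at this
      exact ((hf_cont.tendsto 0).comp h1).const_mul _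
  have heq : ∫ y : ℝ, auxKernel y * f 0 = f 0 := by
    rw [MeasureTheory.integral_mul_const, integral_auxKernel, one_mul]
  rw [heq] at key
  apply key.congr'
  filter_upwards [self_mem_nhdsWithin] with T hT
  exact (integral_greenFn_mul hT f).symm
end

section
/- Let Δ₀ : ℝ → ℝ be Lebesgue integrable and define Δ(X,T) = ∫_ℝ G(X−Y,T) Δ₀(Y) dY for T > 0. Then for every real X and every T > 0, Δ is differentiable in T, four times differentiable in X, and satisfies the linearized capillary-driven thin film equation ∂_T Δ(X,T) + ∂_X⁴ Δ(X,T) = 0. -/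
open MeasureTheory Real

open Metric

lemma integrable_aux (n : ℕ) {t : ℝ} (ht : 0 < t) :
    Integrable (fun K : ℝ => |K| ^ n * Real.exp (-K ^ 4 * t)) := by
  have hhalf : 0 < t / 2 := half_pos ht
  refine ((integrable_exp_neg_mul_sq hhalf).const_mul
      (Real.exp ((n : ℝ) ^ 2 / (2 * t) + t))).mono'
      (Continuous.aestronglyMeasurable (by continuity))
      (Filter.Eventually.of_forall fun K => ?_)
  have hA : (0:ℝ) ≤ |K| := abs_nonneg K
  have h1 : |K| ^ n ≤ Real.exp ((n : ℝ) * |K|) := by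
    calc |K| ^ n ≤ Real.exp |K| ^ n :=
          pow_le_pow_left₀ hA (by linarith [Real.add_one_le_exp |K|]) n
      _ = Real.exp ((n : ℝ) * |K|) := by rw [← Real.exp_nat_mul]
  have hK4 : K ^ 4 = |K| ^ 4 := by
    rw [pow_abs]; exact (abs_of_nonneg (by positivity)).symm
  have hK2 : K ^ 2 = |K| ^ 2 := (sq_abs K).symm
  rw [Real.norm_eq_abs, abs_of_nonneg (by positivity)]
  refine le_trans (mul_le_mul_of_nonneg_right h1 (Real.exp_pos _).le) ?_
  rw [← Real.exp_add, ← Real.exp_add]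
  apply Real.exp_le_exp.mpr
  rw [hK4, hK2]
  have h0 : (0:ℝ) ≤ (t * |K| - (n : ℝ)) ^ 2 / (2 * t) := by positivity
  have heq : (t * |K| - (n : ℝ)) ^ 2 / (2 * t)
      = (n : ℝ) ^ 2 / (2 * t) + (t / 2) * |K| ^ 2 - (n : ℝ) * |K| := by
    field_simp; ring
  have key : (n : ℝ) * |K| ≤ (n : ℝ) ^ 2 / (2 * t) + (t / 2) * |K| ^ 2 := by
    rw [heq] at h0; linarith
  nlinarith [mul_nonneg ht.le (sq_nonneg (|K| ^ 2 - 1)), key]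

lemma norm_aux {M t : ℝ} (i : ℕ) {a b : ℝ → ℝ} (hMa : ∀ K, |a K| ≤ M)
    (hMb : ∀ K, |b K| ≤ M) (x K : ℝ) :
    ‖Real.exp (-K ^ 4 * t) * K ^ i * (Real.cos (K * x) * a K + Real.sin (K * x) * b K)‖
      ≤ 2 * M * (|K| ^ i * Real.exp (-K ^ 4 * t)) := by
  have h1 : |Real.cos (K * x) * a K + Real.sin (K * x) * b K| ≤ 2 * M := by
    have h2 := abs_add_le (Real.cos (K * x) * a K) (Real.sin (K * x) * b K)
    rw [abs_mul, abs_mul] at h2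
    nlinarith [Real.abs_cos_le_one (K * x), Real.abs_sin_le_one (K * x), hMa K, hMb K,
      abs_nonneg (a K), abs_nonneg (b K), abs_nonneg (Real.cos (K * x)),
      abs_nonneg (Real.sin (K * x))]
  have h3 : (0:ℝ) ≤ Real.exp (-K ^ 4 * t) * |K| ^ i := by positivity
  rw [Real.norm_eq_abs, abs_mul, abs_mul, Real.abs_exp, abs_pow]
  nlinarith [mul_le_mul_of_nonneg_left h1 h3]

lemma aesm_aux {t : ℝ} (i : ℕ) {a b : ℝ → ℝ}
    (ha : AEStronglyMeasurable a (volume : Measure ℝ))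
    (hb : AEStronglyMeasurable b (volume : Measure ℝ)) (x : ℝ) :
    AEStronglyMeasurable
      (fun K : ℝ => Real.exp (-K ^ 4 * t) * K ^ i *
        (Real.cos (K * x) * a K + Real.sin (K * x) * b K)) (volume : Measure ℝ) :=
  (Continuous.aestronglyMeasurable (by fun_prop)).mul
    (((Continuous.aestronglyMeasurable (by fun_prop)).mul ha).add
      ((Continuous.aestronglyMeasurable (by fun_prop)).mul hb))

lemma integrable_I {t : ℝ} (ht : 0 < t) (i : ℕ) {a b : ℝ → ℝ} {M : ℝ}
    (ha : AEStronglyMeasurable a (volume : Measure ℝ))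
    (hb : AEStronglyMeasurable b (volume : Measure ℝ))
    (hMa : ∀ K, |a K| ≤ M) (hMb : ∀ K, |b K| ≤ M) (x : ℝ) :
    Integrable (fun K : ℝ => Real.exp (-K ^ 4 * t) * K ^ i *
      (Real.cos (K * x) * a K + Real.sin (K * x) * b K)) :=
  ((integrable_aux i ht).const_mul (2 * M)).mono' (aesm_aux i ha hb x)
    (Filter.Eventually.of_forall fun K => norm_aux i hMa hMb x K)

lemma hasDerivAt_I {t : ℝ} (ht : 0 < t) (i : ℕ) {a b : ℝ → ℝ} {M : ℝ}
    (ha : AEStronglyMeasurable a (volume : Measure ℝ))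
    (hb : AEStronglyMeasurable b (volume : Measure ℝ))
    (hMa : ∀ K, |a K| ≤ M) (hMb : ∀ K, |b K| ≤ M) (X : ℝ) :
    HasDerivAt
      (fun x => ∫ K : ℝ, Real.exp (-K ^ 4 * t) * K ^ i *
        (Real.cos (K * x) * a K + Real.sin (K * x) * b K))
      (∫ K : ℝ, Real.exp (-K ^ 4 * t) * K ^ (i + 1) *
        (Real.cos (K * X) * b K + Real.sin (K * X) * (-a K))) X := by
  have hMa' : ∀ K, |(-a K : ℝ)| ≤ M := fun K => by rw [abs_neg]; exact hMa K
  refine (hasDerivAt_integral_of_dominated_loc_of_deriv_le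
      (F := fun x K => Real.exp (-K ^ 4 * t) * K ^ i *
        (Real.cos (K * x) * a K + Real.sin (K * x) * b K))
      (F' := fun x K => Real.exp (-K ^ 4 * t) * K ^ (i + 1) *
        (Real.cos (K * x) * b K + Real.sin (K * x) * (-a K)))
      (bound := fun K => 2 * M * (|K| ^ (i + 1) * Real.exp (-K ^ 4 * t)))
      (Metric.ball_mem_nhds X one_pos) ?_ ?_ ?_ ?_ ?_ ?_).2
  · exact Filter.Eventually.of_forall fun x => aesm_aux i ha hb x
  · exact integrable_I ht i ha hb hMa hMb X
  · exact aesm_aux (i + 1) hb ha.neg X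
  · exact Filter.Eventually.of_forall fun K x _ => norm_aux (i + 1) hMb hMa' x K
  · exact (integrable_aux (i + 1) ht).const_mul (2 * M)
  · refine Filter.Eventually.of_forall fun K x _ => ?_
    have hK : HasDerivAt (fun y : ℝ => K * y) K x := by
      simpa using (hasDerivAt_id x).const_mul K
    have h := ((hK.cos.mul_const (a K)).add (hK.sin.mul_const (b K))).const_mul
      (Real.exp (-K ^ 4 * t) * K ^ i)
    exact h.congr_deriv (by ring)

lemma hasDerivAt_J {T : ℝ} (hT : 0 < T) {a b : ℝ → ℝ} {M : ℝ}
    (ha : AEStronglyMeasurable a (volume : Measure ℝ))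
    (hb : AEStronglyMeasurable b (volume : Measure ℝ))
    (hMa : ∀ K, |a K| ≤ M) (hMb : ∀ K, |b K| ≤ M) (X : ℝ) :
    HasDerivAt
      (fun t => ∫ K : ℝ, Real.exp (-K ^ 4 * t) *
        (Real.cos (K * X) * a K + Real.sin (K * X) * b K))
      (∫ K : ℝ, -K ^ 4 * Real.exp (-K ^ 4 * T) *
        (Real.cos (K * X) * a K + Real.sin (K * X) * b K)) T := by
  have hM0 : 0 ≤ M := (abs_nonneg _).trans (hMa 0)
  have hhalf : 0 < T / 2 := half_pos hT
  have hmeas : ∀ t : ℝ, AEStronglyMeasurable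
      (fun K : ℝ => Real.exp (-K ^ 4 * t) *
        (Real.cos (K * X) * a K + Real.sin (K * X) * b K)) (volume : Measure ℝ) :=
    fun t => (Continuous.aestronglyMeasurable (by fun_prop)).mul
      (((Continuous.aestronglyMeasurable (by fun_prop)).mul ha).add
        ((Continuous.aestronglyMeasurable (by fun_prop)).mul hb))
  refine (hasDerivAt_integral_of_dominated_loc_of_deriv_le
      (F := fun t K => Real.exp (-K ^ 4 * t) *
        (Real.cos (K * X) * a K + Real.sin (K * X) * b K))
      (F' := fun t K => -K ^ 4 * Real.exp (-K ^ 4 * t) *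
        (Real.cos (K * X) * a K + Real.sin (K * X) * b K))
      (bound := fun K => 2 * M * (|K| ^ 4 * Real.exp (-K ^ 4 * (T / 2))))
      (Metric.ball_mem_nhds T hhalf) ?_ ?_ ?_ ?_ ?_ ?_).2
  · exact Filter.Eventually.of_forall hmeas
  · refine Integrable.mono' ((integrable_aux 0 hT).const_mul (2 * M)) (hmeas T)
      (Filter.Eventually.of_forall fun K => ?_)
    simpa using norm_aux (t := T) (M := M) 0 hMa hMb X K
  · exact (Continuous.aestronglyMeasurable (by fun_prop)).mul
      (((Continuous.aestronglyMeasurable (by fun_prop)).mul ha).add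
        ((Continuous.aestronglyMeasurable (by fun_prop)).mul hb))
  · refine Filter.Eventually.of_forall fun K t htb => ?_
    have h1 : T / 2 ≤ t := by
      have h := Metric.mem_ball.mp htb
      rw [Real.dist_eq, abs_lt] at h
      linarith [h.1]
    have hK4 : (0:ℝ) ≤ K ^ 4 := by positivity
    have h2 : Real.exp (-K ^ 4 * t) ≤ Real.exp (-K ^ 4 * (T / 2)) :=
      Real.exp_le_exp.mpr (by nlinarith)
    have h3 := norm_aux (t := t) (M := M) 4 hMa hMb X K
    have h4 : ‖-K ^ 4 * Real.exp (-K ^ 4 * t) *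
        (Real.cos (K * X) * a K + Real.sin (K * X) * b K)‖
        = ‖Real.exp (-K ^ 4 * t) * K ^ 4 *
        (Real.cos (K * X) * a K + Real.sin (K * X) * b K)‖ := by
      rw [show -K ^ 4 * Real.exp (-K ^ 4 * t) *
          (Real.cos (K * X) * a K + Real.sin (K * X) * b K)
          = -(Real.exp (-K ^ 4 * t) * K ^ 4 *
          (Real.cos (K * X) * a K + Real.sin (K * X) * b K)) by ring, norm_neg]
    rw [h4]
    refine h3.trans ?_
    nlinarith [mul_le_mul_of_nonneg_left h2
      (by positivity : (0:ℝ) ≤ 2 * M * |K| ^ 4), pow_nonneg (abs_nonneg K) 4]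
  · exact (integrable_aux 4 hhalf).const_mul (2 * M)
  · refine Filter.Eventually.of_forall fun K t _ => ?_
    have h0 : HasDerivAt (fun u : ℝ => -K ^ 4 * u) (-K ^ 4) t := by
      simpa using (hasDerivAt_id t).const_mul (-K ^ 4 : ℝ)
    have h := (h0.exp).mul_const (Real.cos (K * X) * a K + Real.sin (K * X) * b K)
    exact h.congr_deriv (by ring)

lemma fubini_aux {Δ₀ : ℝ → ℝ} (hΔ₀ : Integrable Δ₀) {t : ℝ} (ht : 0 < t) (x : ℝ) :
    ∫ Y : ℝ, greenFn (x - Y) t * Δ₀ Y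
      = (1 / (2 * Real.pi)) * ∫ K : ℝ, Real.exp (-K ^ 4 * t) *
          (Real.cos (K * x) * (∫ Y : ℝ, Real.cos (K * Y) * Δ₀ Y)
            + Real.sin (K * x) * (∫ Y : ℝ, Real.sin (K * Y) * Δ₀ Y)) := by
  have hexp : Integrable (fun K : ℝ => Real.exp (-K ^ 4 * t)) := by
    simpa using integrable_aux 0 ht
  have hswap : Integrable (Function.uncurry fun Y K : ℝ =>
      Real.exp (-K ^ 4 * t) * Real.cos (K * (x - Y)) * Δ₀ Y) (volume.prod volume) := by
    refine Integrable.mono' (hΔ₀.norm.mul_prod hexp) ?_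
      (Filter.Eventually.of_forall fun z => ?_)
    · exact (Continuous.aestronglyMeasurable
        (by fun_prop : Continuous fun z : ℝ × ℝ =>
          Real.exp (-z.2 ^ 4 * t) * Real.cos (z.2 * (x - z.1)))).mul hΔ₀.1.comp_fst
    · simp only [Function.uncurry]
      rw [norm_mul, norm_mul, Real.norm_eq_abs, Real.norm_eq_abs, Real.norm_eq_abs,
        Real.abs_exp]
      have h5 := mul_le_mul_of_nonneg_right
        (mul_le_of_le_one_right (Real.exp_pos (-z.2 ^ 4 * t)).le
          (Real.abs_cos_le_one (z.2 * (x - z.1)))) (abs_nonneg (Δ₀ z.1))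
      nlinarith [h5]
  calc ∫ Y : ℝ, greenFn (x - Y) t * Δ₀ Y
      = ∫ Y : ℝ, (1 / (2 * Real.pi)) *
          ((∫ K : ℝ, Real.exp (-K ^ 4 * t) * Real.cos (K * (x - Y))) * Δ₀ Y) := by
        simp only [greenFn, mul_assoc]
    _ = (1 / (2 * Real.pi)) * ∫ Y : ℝ,
          (∫ K : ℝ, Real.exp (-K ^ 4 * t) * Real.cos (K * (x - Y))) * Δ₀ Y :=
        integral_const_mul _ _
    _ = (1 / (2 * Real.pi)) * ∫ Y : ℝ,
          ∫ K : ℝ, Real.exp (-K ^ 4 * t) * Real.cos (K * (x - Y)) * Δ₀ Y := by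
        congr 1
        refine integral_congr_ae (Filter.Eventually.of_forall fun Y => ?_)
        exact (integral_mul_const _ _).symm
    _ = (1 / (2 * Real.pi)) * ∫ K : ℝ,
          ∫ Y : ℝ, Real.exp (-K ^ 4 * t) * Real.cos (K * (x - Y)) * Δ₀ Y := by
        rw [integral_integral_swap hswap]
    _ = (1 / (2 * Real.pi)) * ∫ K : ℝ, Real.exp (-K ^ 4 * t) *
          (Real.cos (K * x) * (∫ Y : ℝ, Real.cos (K * Y) * Δ₀ Y)
            + Real.sin (K * x) * (∫ Y : ℝ, Real.sin (K * Y) * Δ₀ Y)) := by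
        congr 1
        refine integral_congr_ae (Filter.Eventually.of_forall fun K => ?_)
        have hcos : Integrable fun Y : ℝ => Real.cos (K * Y) * Δ₀ Y :=
          hΔ₀.bdd_mul (Continuous.aestronglyMeasurable (by fun_prop))
            (c := 1) (Filter.Eventually.of_forall fun Y => by rw [Real.norm_eq_abs]; exact Real.abs_cos_le_one _)
        have hsin : Integrable fun Y : ℝ => Real.sin (K * Y) * Δ₀ Y :=
          hΔ₀.bdd_mul (Continuous.aestronglyMeasurable (by fun_prop))
            (c := 1) (Filter.Eventually.of_forall fun Y => by rw [Real.norm_eq_abs]; exact Real.abs_sin_le_one _)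
        calc ∫ Y : ℝ, Real.exp (-K ^ 4 * t) * Real.cos (K * (x - Y)) * Δ₀ Y
            = ∫ Y : ℝ, (Real.exp (-K ^ 4 * t) * Real.cos (K * x)) *
                (Real.cos (K * Y) * Δ₀ Y)
              + (Real.exp (-K ^ 4 * t) * Real.sin (K * x)) *
                (Real.sin (K * Y) * Δ₀ Y) := by
              refine integral_congr_ae (Filter.Eventually.of_forall fun Y => ?_)
              beta_reduce
              rw [show K * (x - Y) = K * x - K * Y by ring, Real.cos_sub]
              ring
          _ = (Real.exp (-K ^ 4 * t) * Real.cos (K * x)) *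
                (∫ Y : ℝ, Real.cos (K * Y) * Δ₀ Y)
              + (Real.exp (-K ^ 4 * t) * Real.sin (K * x)) *
                (∫ Y : ℝ, Real.sin (K * Y) * Δ₀ Y) := by
              rw [integral_add (hcos.const_mul _) (hsin.const_mul _),
                integral_const_mul, integral_const_mul]
          _ = Real.exp (-K ^ 4 * t) *
                (Real.cos (K * x) * (∫ Y : ℝ, Real.cos (K * Y) * Δ₀ Y)
                  + Real.sin (K * x) * (∫ Y : ℝ, Real.sin (K * Y) * Δ₀ Y)) := by
              ring

lemma main_aux {c : ℝ} {A B : ℝ → ℝ} {M : ℝ}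
    (hA : AEStronglyMeasurable A (volume : Measure ℝ))
    (hB : AEStronglyMeasurable B (volume : Measure ℝ))
    (hMA : ∀ K, |A K| ≤ M) (hMB : ∀ K, |B K| ≤ M)
    (Δ : ℝ → ℝ → ℝ) {T : ℝ} (hT : 0 < T)
    (hrep : ∀ x t : ℝ, 0 < t → Δ x t = c * ∫ K : ℝ, Real.exp (-K ^ 4 * t) *
      (Real.cos (K * x) * A K + Real.sin (K * x) * B K)) (X : ℝ) :
    DifferentiableAt ℝ (fun t => Δ X t) T ∧
    (∀ i < 4, DifferentiableAt ℝ (iteratedDeriv i (fun x => Δ x T)) X) ∧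
    deriv (fun t => Δ X t) T + iteratedDeriv 4 (fun x => Δ x T) X = 0 := by
  have hMA' : ∀ K, |(-A K : ℝ)| ≤ M := fun K => by rw [abs_neg]; exact hMA K
  have hMB' : ∀ K, |(-B K : ℝ)| ≤ M := fun K => by rw [abs_neg]; exact hMB K
  -- spatial derivative chain
  have h0 : ∀ x : ℝ, HasDerivAt
      (fun x => ∫ K : ℝ, Real.exp (-K ^ 4 * T) * K ^ (0:ℕ) *
        (Real.cos (K * x) * A K + Real.sin (K * x) * B K))
      (∫ K : ℝ, Real.exp (-K ^ 4 * T) * K ^ (1:ℕ) *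
        (Real.cos (K * x) * B K + Real.sin (K * x) * (-A K))) x :=
    fun x => hasDerivAt_I hT 0 hA hB hMA hMB x
  have h1 : ∀ x : ℝ, HasDerivAt
      (fun x => ∫ K : ℝ, Real.exp (-K ^ 4 * T) * K ^ (1:ℕ) *
        (Real.cos (K * x) * B K + Real.sin (K * x) * (-A K)))
      (∫ K : ℝ, Real.exp (-K ^ 4 * T) * K ^ (2:ℕ) *
        (Real.cos (K * x) * (-A K) + Real.sin (K * x) * (-B K))) x :=
    fun x => hasDerivAt_I hT 1 hB hA.neg hMB hMA' x
  have h2 : ∀ x : ℝ, HasDerivAt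
      (fun x => ∫ K : ℝ, Real.exp (-K ^ 4 * T) * K ^ (2:ℕ) *
        (Real.cos (K * x) * (-A K) + Real.sin (K * x) * (-B K)))
      (∫ K : ℝ, Real.exp (-K ^ 4 * T) * K ^ (3:ℕ) *
        (Real.cos (K * x) * (-B K) + Real.sin (K * x) * (A K))) x := fun x => by
    simpa only [neg_neg] using
      hasDerivAt_I hT 2 (a := fun K => -A K) (b := fun K => -B K) hA.neg hB.neg hMA' hMB' x
  have h3 : ∀ x : ℝ, HasDerivAt
      (fun x => ∫ K : ℝ, Real.exp (-K ^ 4 * T) * K ^ (3:ℕ) *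
        (Real.cos (K * x) * (-B K) + Real.sin (K * x) * (A K)))
      (∫ K : ℝ, Real.exp (-K ^ 4 * T) * K ^ (4:ℕ) *
        (Real.cos (K * x) * (A K) + Real.sin (K * x) * (B K))) x := fun x => by
    simpa only [neg_neg] using
      hasDerivAt_I hT 3 (a := fun K => -B K) (b := A) hB.neg hA hMB' hMA x
  -- representation of the T-slice
  have hu : (fun x => Δ x T) = fun x => c * ∫ K : ℝ, Real.exp (-K ^ 4 * T) * K ^ (0:ℕ) *
      (Real.cos (K * x) * A K + Real.sin (K * x) * B K) := by
    funext x
    rw [hrep x T hT]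
    congr 1
    exact integral_congr_ae (Filter.Eventually.of_forall fun K => by ring)
  -- iterated derivatives
  have i1 : iteratedDeriv 1 (fun x => c * ∫ K : ℝ, Real.exp (-K ^ 4 * T) * K ^ (0:ℕ) *
      (Real.cos (K * x) * A K + Real.sin (K * x) * B K))
      = fun x => c * ∫ K : ℝ, Real.exp (-K ^ 4 * T) * K ^ (1:ℕ) *
      (Real.cos (K * x) * B K + Real.sin (K * x) * (-A K)) := by
    rw [iteratedDeriv_one]
    funext x
    exact ((h0 x).const_mul c).deriv
  have i2 : iteratedDeriv 2 (fun x => c * ∫ K : ℝ, Real.exp (-K ^ 4 * T) * K ^ (0:ℕ) *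
      (Real.cos (K * x) * A K + Real.sin (K * x) * B K))
      = fun x => c * ∫ K : ℝ, Real.exp (-K ^ 4 * T) * K ^ (2:ℕ) *
      (Real.cos (K * x) * (-A K) + Real.sin (K * x) * (-B K)) := by
    rw [iteratedDeriv_succ, i1]
    funext x
    exact ((h1 x).const_mul c).deriv
  have i3 : iteratedDeriv 3 (fun x => c * ∫ K : ℝ, Real.exp (-K ^ 4 * T) * K ^ (0:ℕ) *
      (Real.cos (K * x) * A K + Real.sin (K * x) * B K))
      = fun x => c * ∫ K : ℝ, Real.exp (-K ^ 4 * T) * K ^ (3:ℕ) *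
      (Real.cos (K * x) * (-B K) + Real.sin (K * x) * (A K)) := by
    rw [iteratedDeriv_succ, i2]
    funext x
    exact ((h2 x).const_mul c).deriv
  have i4 : iteratedDeriv 4 (fun x => c * ∫ K : ℝ, Real.exp (-K ^ 4 * T) * K ^ (0:ℕ) *
      (Real.cos (K * x) * A K + Real.sin (K * x) * B K))
      = fun x => c * ∫ K : ℝ, Real.exp (-K ^ 4 * T) * K ^ (4:ℕ) *
      (Real.cos (K * x) * (A K) + Real.sin (K * x) * (B K)) := by
    rw [iteratedDeriv_succ, i3]
    funext x
    exact ((h3 x).const_mul c).deriv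
  -- time derivative
  have heq : (fun t => Δ X t) =ᶠ[nhds T] fun t => c * ∫ K : ℝ, Real.exp (-K ^ 4 * t) *
      (Real.cos (K * X) * A K + Real.sin (K * X) * B K) := by
    filter_upwards [eventually_gt_nhds hT] with t ht'
    exact hrep X t ht'
  have hDT : HasDerivAt (fun t => Δ X t)
      (c * ∫ K : ℝ, -K ^ 4 * Real.exp (-K ^ 4 * T) *
        (Real.cos (K * X) * A K + Real.sin (K * X) * B K)) T :=
    HasDerivAt.congr_of_eventuallyEq
      ((hasDerivAt_J hT hA hB hMA hMB X).const_mul c) heq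
  refine ⟨hDT.differentiableAt, ?_, ?_⟩
  · intro i hi
    interval_cases i
    · rw [iteratedDeriv_zero, hu]
      exact ((h0 X).const_mul c).differentiableAt
    · rw [hu, i1]
      exact ((h1 X).const_mul c).differentiableAt
    · rw [hu, i2]
      exact ((h2 X).const_mul c).differentiableAt
    · rw [hu, i3]
      exact ((h3 X).const_mul c).differentiableAt
  · have i4' : iteratedDeriv 4 (fun x => Δ x T) X
        = c * ∫ K : ℝ, Real.exp (-K ^ 4 * T) * K ^ (4:ℕ) *
          (Real.cos (K * X) * (A K) + Real.sin (K * X) * (B K)) := by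
      rw [hu, i4]
    have hneg : (∫ K : ℝ, -K ^ 4 * Real.exp (-K ^ 4 * T) *
        (Real.cos (K * X) * A K + Real.sin (K * X) * B K))
        = -(∫ K : ℝ, Real.exp (-K ^ 4 * T) * K ^ (4:ℕ) *
          (Real.cos (K * X) * (A K) + Real.sin (K * X) * (B K))) := by
      rw [← integral_neg]
      exact integral_congr_ae (Filter.Eventually.of_forall fun K => by ring)
    rw [hDT.deriv, i4', hneg]
    ring

/-- For a Lebesgue integrable initial profile `Δ₀`, the convolution
`Δ(X,T) = ∫ Y, G(X−Y,T) Δ₀(Y) dY` is differentiable in `T`, four times differentiable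
in `X`, and satisfies the linearized thin film equation `∂_T Δ + ∂_X⁴ Δ = 0`
for every real `X` and every `T > 0`. -/
theorem convolution_solves_linear_thin_film (Δ₀ : ℝ → ℝ) (hΔ₀ : Integrable Δ₀)
    (Δ : ℝ → ℝ → ℝ) (hΔ : ∀ X T : ℝ, Δ X T = ∫ Y : ℝ, greenFn (X - Y) T * Δ₀ Y)
    (X T : ℝ) (hT : 0 < T) :
    DifferentiableAt ℝ (fun t => Δ X t) T ∧
    (∀ i < 4, DifferentiableAt ℝ (iteratedDeriv i (fun x => Δ x T)) X) ∧
    deriv (fun t => Δ X t) T + iteratedDeriv 4 (fun x => Δ x T) X = 0 := by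
  have hAc : Continuous fun K : ℝ => ∫ Y : ℝ, Real.cos (K * Y) * Δ₀ Y := by
    refine continuous_of_dominated
      (fun k => (Continuous.aestronglyMeasurable (by fun_prop)).mul hΔ₀.1)
      (fun k => Filter.Eventually.of_forall fun Y => ?_) hΔ₀.norm
      (Filter.Eventually.of_forall fun Y => by fun_prop)
    rw [norm_mul]
    exact mul_le_of_le_one_left (norm_nonneg _)
      (by rw [Real.norm_eq_abs]; exact Real.abs_cos_le_one _)
  have hBc : Continuous fun K : ℝ => ∫ Y : ℝ, Real.sin (K * Y) * Δ₀ Y := by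
    refine continuous_of_dominated
      (fun k => (Continuous.aestronglyMeasurable (by fun_prop)).mul hΔ₀.1)
      (fun k => Filter.Eventually.of_forall fun Y => ?_) hΔ₀.norm
      (Filter.Eventually.of_forall fun Y => by fun_prop)
    rw [norm_mul]
    exact mul_le_of_le_one_left (norm_nonneg _)
      (by rw [Real.norm_eq_abs]; exact Real.abs_sin_le_one _)
  have hMA : ∀ K : ℝ, |∫ Y : ℝ, Real.cos (K * Y) * Δ₀ Y| ≤ ∫ Y : ℝ, |Δ₀ Y| := by
    intro K
    have hcos : Integrable fun Y : ℝ => Real.cos (K * Y) * Δ₀ Y :=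
      hΔ₀.bdd_mul (Continuous.aestronglyMeasurable (by fun_prop))
        (c := 1) (Filter.Eventually.of_forall fun Y => by rw [Real.norm_eq_abs]; exact Real.abs_cos_le_one _)
    have h := norm_integral_le_integral_norm (μ := volume)
      (fun Y : ℝ => Real.cos (K * Y) * Δ₀ Y)
    simp only [Real.norm_eq_abs] at h
    refine h.trans (integral_mono hcos.abs hΔ₀.abs fun Y => ?_)
    rw [abs_mul]
    exact mul_le_of_le_one_left (abs_nonneg _) (Real.abs_cos_le_one _)
  have hMB : ∀ K : ℝ, |∫ Y : ℝ, Real.sin (K * Y) * Δ₀ Y| ≤ ∫ Y : ℝ, |Δ₀ Y| := by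
    intro K
    have hsin : Integrable fun Y : ℝ => Real.sin (K * Y) * Δ₀ Y :=
      hΔ₀.bdd_mul (Continuous.aestronglyMeasurable (by fun_prop))
        (c := 1) (Filter.Eventually.of_forall fun Y => by rw [Real.norm_eq_abs]; exact Real.abs_sin_le_one _)
    have h := norm_integral_le_integral_norm (μ := volume)
      (fun Y : ℝ => Real.sin (K * Y) * Δ₀ Y)
    simp only [Real.norm_eq_abs] at h
    refine h.trans (integral_mono hsin.abs hΔ₀.abs fun Y => ?_)
    rw [abs_mul]
    exact mul_le_of_le_one_left (abs_nonneg _) (Real.abs_sin_le_one _)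
  exact main_aux hAc.aestronglyMeasurable hBc.aestronglyMeasurable hMA hMB Δ hT
    (fun x t ht => by rw [hΔ x t, fubini_aux hΔ₀ ht x]) X
end

section
/- Let Δ₀ : ℝ → ℝ be Lebesgue integrable, let M₀ = ∫_ℝ Δ₀(Y) dY, and define Δ(X,T) = ∫_ℝ G(X−Y,T) Δ₀(Y) dY for T > 0. Then for every T > 0 and every real U, |T^{1/4} · Δ(U·T^{1/4}, T) − M₀ · φ(U)| ≤ (1/(2π)) ∫_ℝ dQ exp(−Q⁴) ∫_ℝ dY |exp(−iQY·T^{−1/4}) − 1| · |Δ₀(Y)|; in particular the bound is uniform in U. -/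
open MeasureTheory Real

/-- The self-similar attractor profile `φ(U) = (1/(2π)) ∫ Q, exp(−Q⁴) cos(Q U)`. -/
noncomputable def phiFn (U : ℝ) : ℝ :=
  (1 / (2 * Real.pi)) * ∫ Q : ℝ, Real.exp (-Q ^ 4) * Real.cos (Q * U)

lemma int_exp4 : Integrable (fun Q : ℝ => Real.exp (-Q ^ 4)) := by
  refine Integrable.mono' ((integrable_exp_neg_mul_sq one_pos).const_mul (Real.exp (1/4))) ?_ ?_
  · exact (Real.continuous_exp.comp (by continuity)).aestronglyMeasurable
  · filter_upwards with x
    rw [Real.norm_eq_abs, abs_of_pos (Real.exp_pos _), ← Real.exp_add]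
    exact Real.exp_le_exp.mpr (by nlinarith [sq_nonneg (x ^ 2 - 1/2)])

lemma abs_cos_sub_cos (b c : ℝ) :
    |Real.cos (b - c) - Real.cos b| ≤ ‖ (Complex.exp (-(c : ℂ) * Complex.I) - 1)‖ := by
  have h1 : Real.cos (b - c) - Real.cos b
      = (Complex.exp ((b : ℂ) * Complex.I) * (Complex.exp (-(c : ℂ) * Complex.I) - 1)).re := by
    rw [mul_sub, mul_one, ← Complex.exp_add]
    have h2 : (b : ℂ) * Complex.I + -(c : ℂ) * Complex.I = ((b - c : ℝ) : ℂ) * Complex.I := by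
      push_cast; ring
    rw [h2, Complex.sub_re, Complex.exp_ofReal_mul_I_re, Complex.exp_ofReal_mul_I_re]
  rw [h1]
  refine (Complex.abs_re_le_norm _).trans ?_
  rw [norm_mul, Complex.norm_exp_ofReal_mul_I, one_mul]

lemma exp_arg_eq (Q Y a : ℝ) :
    -Complex.I * (Q : ℂ) * (Y : ℂ) * ((a : ℝ) : ℂ) = (-(Q * (Y * a) : ℝ) : ℂ) * Complex.I := by
  push_cast; ring

lemma abs_exp_i_sub_one_le (Q Y a : ℝ) :
    ‖ (Complex.exp (-Complex.I * (Q : ℂ) * (Y : ℂ) * ((a : ℝ) : ℂ)) - 1)‖ ≤ 2 := by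
  rw [exp_arg_eq, ← Complex.ofReal_neg]
  set e := Complex.exp (((-(Q * (Y * a)) : ℝ) : ℂ) * Complex.I) with he
  calc ‖e - 1‖ = ‖e - 1‖ := rfl
    _ ≤ ‖e‖ + ‖(1 : ℂ)‖ := norm_sub_le _ _
    _ = 2 := by
        rw [he, Complex.norm_exp_ofReal_mul_I, norm_one]; norm_num

lemma green_scaling {T : ℝ} (hT : 0 < T) (X : ℝ) :
    T ^ ((1 / 4 : ℝ)) * greenFn X T =
      (1 / (2 * Real.pi)) *
        ∫ Q : ℝ, Real.exp (-Q ^ 4) * Real.cos (Q * (X * T ^ (-(1 / 4 : ℝ)))) := by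
  set a : ℝ := T ^ (-(1 / 4 : ℝ)) with ha_def
  set s : ℝ := T ^ ((1 / 4 : ℝ)) with hs_def
  have hs : 0 < s := Real.rpow_pos_of_pos hT _
  have ha : 0 < a := Real.rpow_pos_of_pos hT _
  have hsa : s * a = 1 := by
    rw [hs_def, ha_def, ← Real.rpow_add hT]; norm_num
  have hs4 : s ^ 4 = T := by
    rw [hs_def, ← Real.rpow_natCast (T ^ ((1 / 4 : ℝ))) 4, ← Real.rpow_mul hT.le]
    norm_num
  have hinv : s⁻¹ = a := inv_eq_of_mul_eq_one_right hsa
  have key := MeasureTheory.Measure.integral_comp_mul_left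
      (fun Q : ℝ => Real.exp (-Q ^ 4) * Real.cos (Q * (X * a))) s
  have h1 : (fun K : ℝ => Real.exp (-(s * K) ^ 4) * Real.cos ((s * K) * (X * a)))
      = fun K : ℝ => Real.exp (-K ^ 4 * T) * Real.cos (K * X) := by
    funext K
    have e1 : (s * K) ^ 4 = T * K ^ 4 := by rw [mul_pow, hs4]
    have e2 : (s * K) * (X * a) = K * X := by
      have h : (s * K) * (X * a) = (s * a) * (K * X) := by ring
      rw [h, hsa, one_mul]
    rw [e1, e2]; ring_nf
  rw [h1] at key
  rw [greenFn, key, hinv, abs_of_pos ha, smul_eq_mul]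
  set I := ∫ Q : ℝ, Real.exp (-Q ^ 4) * Real.cos (Q * (X * a)) with hI
  linear_combination (1 / (2 * Real.pi) * I) * hsa

set_option maxHeartbeats 1000000 in
/-- For an integrable initial profile `Δ₀` with algebraic volume `M₀`, and
`Δ(X,T) = ∫ Y, G(X−Y,T) Δ₀(Y) dY`, one has for every `T > 0` and every real `U` the bound
`|T^{1/4} Δ(U T^{1/4}, T) − M₀ φ(U)|
  ≤ (1/(2π)) ∫ Q, e^{−Q⁴} ∫ Y, |e^{−iQY T^{−1/4}} − 1| |Δ₀(Y)| dY dQ`,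
which is uniform in `U`. -/
theorem rescaled_solution_uniform_bound (Δ₀ : ℝ → ℝ) (hΔ₀ : Integrable Δ₀)
    (M₀ : ℝ) (hM₀ : M₀ = ∫ Y : ℝ, Δ₀ Y)
    (Δ : ℝ → ℝ → ℝ) (hΔ : ∀ X T : ℝ, Δ X T = ∫ Y : ℝ, greenFn (X - Y) T * Δ₀ Y)
    (T : ℝ) (hT : 0 < T) (U : ℝ) :
    |T ^ ((1 / 4 : ℝ)) * Δ (U * T ^ ((1 / 4 : ℝ))) T - M₀ * phiFn U| ≤
      (1 / (2 * Real.pi)) * ∫ Q : ℝ, Real.exp (-Q ^ 4) *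
        ∫ Y : ℝ, ‖
          (Complex.exp (-Complex.I * (Q : ℂ) * (Y : ℂ) * ((T ^ (-(1 / 4 : ℝ)) : ℝ) : ℂ)) - 1)‖
          * |Δ₀ Y| := by
  set a : ℝ := T ^ (-(1 / 4 : ℝ)) with ha_def
  set s : ℝ := T ^ ((1 / 4 : ℝ)) with hs_def
  have hs : 0 < s := Real.rpow_pos_of_pos hT _
  have ha : 0 < a := Real.rpow_pos_of_pos hT _
  have hsa : s * a = 1 := by
    rw [hs_def, ha_def, ← Real.rpow_add hT]; norm_num
  have hπ : (0 : ℝ) < 1 / (2 * Real.pi) := by positivity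
  -- basic integrability of oscillatory integrands in `Q`
  have hQcos : ∀ c : ℝ, Integrable (fun Q : ℝ => Real.exp (-Q ^ 4) * Real.cos (Q * c)) := by
    intro c
    refine int_exp4.mono' ?_ ?_
    · exact ((Real.continuous_exp.comp (by continuity)).mul
        (Real.continuous_cos.comp (by continuity))).aestronglyMeasurable
    · filter_upwards with x
      rw [norm_mul, Real.norm_eq_abs, Real.norm_eq_abs, abs_of_pos (Real.exp_pos _)]
      exact mul_le_of_le_one_right (Real.exp_pos _).le (Real.abs_cos_le_one _)
  -- Step A: scaling
  have hA : s * Δ (U * s) T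
      = (1 / (2 * Real.pi)) *
          ∫ Y : ℝ, (∫ Q : ℝ, Real.exp (-Q ^ 4) * Real.cos (Q * (U - Y * a))) * Δ₀ Y := by
    rw [hΔ, ← integral_const_mul]
    have hfun : (fun Y => s * (greenFn (U * s - Y) T * Δ₀ Y))
        = fun Y => (1 / (2 * Real.pi)) *
            ((∫ Q : ℝ, Real.exp (-Q ^ 4) * Real.cos (Q * (U - Y * a))) * Δ₀ Y) := by
      funext Y
      have hgs := green_scaling hT (U * s - Y)
      rw [← hs_def, ← ha_def] at hgs
      have harg : (U * s - Y) * a = U - Y * a := by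
        have h : (U * s - Y) * a = U * (s * a) - Y * a := by ring
        rw [h, hsa, mul_one]
      calc s * (greenFn (U * s - Y) T * Δ₀ Y)
          = (s * greenFn (U * s - Y) T) * Δ₀ Y := by ring
        _ = ((1 / (2 * Real.pi)) *
              ∫ Q : ℝ, Real.exp (-Q ^ 4) * Real.cos (Q * ((U * s - Y) * a))) * Δ₀ Y := by
            rw [hgs]
        _ = _ := by rw [harg]; ring
    rw [hfun, integral_const_mul]
  -- Step B: the limit profile term
  have hB : M₀ * phiFn U
      = (1 / (2 * Real.pi)) *
          ∫ Y : ℝ, (∫ Q : ℝ, Real.exp (-Q ^ 4) * Real.cos (Q * U)) * Δ₀ Y := by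
    rw [hM₀, phiFn, integral_const_mul]
    ring
  -- product-space integrability of the two integrands
  have hcont1 : Continuous (fun p : ℝ × ℝ =>
      Real.exp (-p.2 ^ 4) * Real.cos (p.2 * (U - p.1 * a))) :=
    (Real.continuous_exp.comp (continuous_snd.pow 4).neg).mul
      (Real.continuous_cos.comp (continuous_snd.mul
        (continuous_const.sub (continuous_fst.mul continuous_const))))
  have hcont2 : Continuous (fun p : ℝ × ℝ =>
      Real.exp (-p.2 ^ 4) * Real.cos (p.2 * U)) :=
    (Real.continuous_exp.comp (continuous_snd.pow 4).neg).mul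
      (Real.continuous_cos.comp (continuous_snd.mul continuous_const))
  have hdom : Integrable (fun p : ℝ × ℝ => ‖Δ₀ p.1‖ * Real.exp (-p.2 ^ 4))
      (volume.prod volume) := hΔ₀.norm.mul_prod int_exp4
  have hbound : ∀ (c : ℝ) (x : ℝ), ‖Real.exp (-x ^ 4) * Real.cos c‖ ≤ Real.exp (-x ^ 4) := by
    intro c x
    rw [norm_mul, Real.norm_eq_abs, Real.norm_eq_abs, abs_of_pos (Real.exp_pos _)]
    exact mul_le_of_le_one_right (Real.exp_pos _).le (Real.abs_cos_le_one _)
  have hintf : Integrable (fun p : ℝ × ℝ =>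
      Real.exp (-p.2 ^ 4) * Real.cos (p.2 * (U - p.1 * a)) * Δ₀ p.1)
      (volume.prod volume) := by
    refine hdom.mono' (hcont1.aestronglyMeasurable.mul hΔ₀.1.comp_fst) ?_
    filter_upwards with p
    rw [norm_mul]
    calc ‖Real.exp (-p.2 ^ 4) * Real.cos (p.2 * (U - p.1 * a))‖ * ‖Δ₀ p.1‖
        ≤ Real.exp (-p.2 ^ 4) * ‖Δ₀ p.1‖ :=
          mul_le_mul_of_nonneg_right (hbound _ _) (norm_nonneg _)
      _ = ‖Δ₀ p.1‖ * Real.exp (-p.2 ^ 4) := mul_comm _ _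
  have hintg : Integrable (fun p : ℝ × ℝ =>
      Real.exp (-p.2 ^ 4) * Real.cos (p.2 * U) * Δ₀ p.1) (volume.prod volume) := by
    refine hdom.mono' (hcont2.aestronglyMeasurable.mul hΔ₀.1.comp_fst) ?_
    filter_upwards with p
    rw [norm_mul]
    calc ‖Real.exp (-p.2 ^ 4) * Real.cos (p.2 * U)‖ * ‖Δ₀ p.1‖
        ≤ Real.exp (-p.2 ^ 4) * ‖Δ₀ p.1‖ :=
          mul_le_mul_of_nonneg_right (hbound _ _) (norm_nonneg _)
      _ = ‖Δ₀ p.1‖ * Real.exp (-p.2 ^ 4) := mul_comm _ _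
  -- Fubini
  have hsw1 : (∫ Y : ℝ, ∫ Q : ℝ, Real.exp (-Q ^ 4) * Real.cos (Q * (U - Y * a)) * Δ₀ Y)
      = ∫ Q : ℝ, ∫ Y : ℝ, Real.exp (-Q ^ 4) * Real.cos (Q * (U - Y * a)) * Δ₀ Y := by
    exact integral_integral_swap
      (f := fun Y Q => Real.exp (-Q ^ 4) * Real.cos (Q * (U - Y * a)) * Δ₀ Y) hintf
  have hsw2 : (∫ Y : ℝ, ∫ Q : ℝ, Real.exp (-Q ^ 4) * Real.cos (Q * U) * Δ₀ Y)
      = ∫ Q : ℝ, ∫ Y : ℝ, Real.exp (-Q ^ 4) * Real.cos (Q * U) * Δ₀ Y := by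
    exact integral_integral_swap
      (f := fun Y Q => Real.exp (-Q ^ 4) * Real.cos (Q * U) * Δ₀ Y) hintg
  -- integrability of the `Q`-marginals
  have hmarg1 : Integrable (fun Q : ℝ =>
      ∫ Y : ℝ, Real.exp (-Q ^ 4) * Real.cos (Q * (U - Y * a)) * Δ₀ Y) := by
    exact hintf.integral_prod_right
  have hmarg2 : Integrable (fun Q : ℝ =>
      ∫ Y : ℝ, Real.exp (-Q ^ 4) * Real.cos (Q * U) * Δ₀ Y) := by
    exact hintg.integral_prod_right
  -- the main identity
  have hmain : s * Δ (U * s) T - M₀ * phiFn U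
      = (1 / (2 * Real.pi)) *
          ∫ Q : ℝ, ((∫ Y : ℝ, Real.exp (-Q ^ 4) * Real.cos (Q * (U - Y * a)) * Δ₀ Y)
            - ∫ Y : ℝ, Real.exp (-Q ^ 4) * Real.cos (Q * U) * Δ₀ Y) := by
    rw [hA, hB, ← mul_sub]
    congr 1
    simp_rw [← integral_mul_const]
    rw [hsw1, hsw2, ← integral_sub hmarg1 hmarg2]
  -- the majorant on the product space
  have habs_cont : Continuous (fun p : ℝ × ℝ =>
      Real.exp (-p.1 ^ 4) *
        ‖ (Complex.exp (-Complex.I * (p.1 : ℂ) * (p.2 : ℂ) * ((a : ℝ) : ℂ)) - 1)‖) := by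
    apply Continuous.mul
    · exact Real.continuous_exp.comp (by continuity)
    · apply continuous_norm.comp
      apply Continuous.sub _ continuous_const
      apply Complex.continuous_exp.comp
      continuity
  have habs_meas : AEStronglyMeasurable (fun Y : ℝ => |Δ₀ Y|) volume := by
    exact hΔ₀.1.norm
  have hHH : Integrable (fun p : ℝ × ℝ =>
      Real.exp (-p.1 ^ 4) *
        (‖ (Complex.exp (-Complex.I * (p.1 : ℂ) * (p.2 : ℂ) * ((a : ℝ) : ℂ)) - 1)‖
          * |Δ₀ p.2|)) (volume.prod volume) := by
    have hdom2 : Integrable (fun p : ℝ × ℝ => Real.exp (-p.1 ^ 4) * (2 * |Δ₀ p.2|))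
        (volume.prod volume) := by
      have : Integrable (fun Y : ℝ => 2 * |Δ₀ Y|) := by
        simpa [Real.norm_eq_abs] using hΔ₀.norm.const_mul 2
      exact int_exp4.mul_prod this
    refine hdom2.mono' ?_ ?_
    · have : (fun p : ℝ × ℝ =>
          Real.exp (-p.1 ^ 4) *
            (‖ (Complex.exp (-Complex.I * (p.1 : ℂ) * (p.2 : ℂ) * ((a : ℝ) : ℂ)) - 1)‖
              * |Δ₀ p.2|))
          = fun p : ℝ × ℝ =>
            (Real.exp (-p.1 ^ 4) *
              ‖ (Complex.exp (-Complex.I * (p.1 : ℂ) * (p.2 : ℂ) * ((a : ℝ) : ℂ)) - 1)‖)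
              * |Δ₀ p.2| := by
        funext p; ring
      rw [this]
      exact habs_cont.aestronglyMeasurable.mul habs_meas.comp_snd
    · filter_upwards with p
      rw [Real.norm_eq_abs, abs_of_nonneg (by positivity)]
      have h2 := abs_exp_i_sub_one_le p.1 p.2 a
      exact mul_le_mul_of_nonneg_left
        (mul_le_mul_of_nonneg_right h2 (abs_nonneg _)) (Real.exp_pos _).le
  -- integrability in `Q` of the right-hand side integrand
  have hrhs_int : Integrable (fun Q : ℝ => Real.exp (-Q ^ 4) *
      ∫ Y : ℝ, ‖
        (Complex.exp (-Complex.I * (Q : ℂ) * (Y : ℂ) * ((a : ℝ) : ℂ)) - 1)‖ * |Δ₀ Y|) := by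
    have h1 := hHH.integral_prod_left
    have h2 : (fun Q : ℝ => ∫ Y : ℝ, Real.exp (-Q ^ 4) *
        (‖ (Complex.exp (-Complex.I * (Q : ℂ) * (Y : ℂ) * ((a : ℝ) : ℂ)) - 1)‖
          * |Δ₀ Y|))
        = fun Q : ℝ => Real.exp (-Q ^ 4) *
          ∫ Y : ℝ, ‖
            (Complex.exp (-Complex.I * (Q : ℂ) * (Y : ℂ) * ((a : ℝ) : ℂ)) - 1)‖ * |Δ₀ Y| := by
      funext Q
      rw [integral_const_mul]
    rw [← h2]
    exact h1
  -- per-Q integrability in Y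
  have hfQ : ∀ Q : ℝ, Integrable (fun Y : ℝ =>
      Real.exp (-Q ^ 4) * Real.cos (Q * (U - Y * a)) * Δ₀ Y) := by
    intro Q
    refine (hΔ₀.norm.const_mul (Real.exp (-Q ^ 4))).mono' ?_ ?_
    · exact (Continuous.aestronglyMeasurable (by continuity)).mul hΔ₀.1
    · filter_upwards with Y
      rw [norm_mul]
      exact mul_le_mul_of_nonneg_right (hbound _ _) (norm_nonneg _)
  have hgQ : ∀ Q : ℝ, Integrable (fun Y : ℝ =>
      Real.exp (-Q ^ 4) * Real.cos (Q * U) * Δ₀ Y) := by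
    intro Q
    exact hΔ₀.const_mul _
  have hHHQ : ∀ Q : ℝ, Integrable (fun Y : ℝ =>
      Real.exp (-Q ^ 4) *
        (‖ (Complex.exp (-Complex.I * (Q : ℂ) * (Y : ℂ) * ((a : ℝ) : ℂ)) - 1)‖
          * |Δ₀ Y|)) := by
    intro Q
    have hd : Integrable (fun Y : ℝ => Real.exp (-Q ^ 4) * (2 * |Δ₀ Y|)) := by
      simpa [Real.norm_eq_abs, mul_assoc] using hΔ₀.norm.const_mul (Real.exp (-Q ^ 4) * 2)
    refine hd.mono' ?_ ?_
    · refine AEStronglyMeasurable.const_mul ?_ _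
      refine AEStronglyMeasurable.mul ?_ habs_meas
      apply Continuous.aestronglyMeasurable
      apply continuous_norm.comp
      apply Continuous.sub _ continuous_const
      apply Complex.continuous_exp.comp
      continuity
    · filter_upwards with Y
      rw [Real.norm_eq_abs, abs_of_nonneg (by positivity)]
      have h2 := abs_exp_i_sub_one_le Q Y a
      exact mul_le_mul_of_nonneg_left
        (mul_le_mul_of_nonneg_right h2 (abs_nonneg _)) (Real.exp_pos _).le
  -- pointwise bound
  have hptw : ∀ Q Y : ℝ,
      |Real.exp (-Q ^ 4) * Real.cos (Q * (U - Y * a)) * Δ₀ Y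
        - Real.exp (-Q ^ 4) * Real.cos (Q * U) * Δ₀ Y|
      ≤ Real.exp (-Q ^ 4) *
          (‖ (Complex.exp (-Complex.I * (Q : ℂ) * (Y : ℂ) * ((a : ℝ) : ℂ)) - 1)‖
            * |Δ₀ Y|) := by
    intro Q Y
    have hd : Real.exp (-Q ^ 4) * Real.cos (Q * (U - Y * a)) * Δ₀ Y
        - Real.exp (-Q ^ 4) * Real.cos (Q * U) * Δ₀ Y
        = Real.exp (-Q ^ 4) * ((Real.cos (Q * U - Q * (Y * a)) - Real.cos (Q * U)) * Δ₀ Y) := by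
      have : Q * (U - Y * a) = Q * U - Q * (Y * a) := by ring
      rw [this]; ring
    rw [hd, abs_mul, abs_mul, abs_of_pos (Real.exp_pos _)]
    refine mul_le_mul_of_nonneg_left ?_ (Real.exp_pos _).le
    refine mul_le_mul_of_nonneg_right ?_ (abs_nonneg _)
    have h := abs_cos_sub_cos (Q * U) (Q * (Y * a))
    rwa [← exp_arg_eq Q Y a] at h
  -- final estimate
  rw [hmain, abs_mul, abs_of_pos hπ]
  refine mul_le_mul_of_nonneg_left ?_ hπ.le
  calc |∫ Q : ℝ, ((∫ Y : ℝ, Real.exp (-Q ^ 4) * Real.cos (Q * (U - Y * a)) * Δ₀ Y)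
          - ∫ Y : ℝ, Real.exp (-Q ^ 4) * Real.cos (Q * U) * Δ₀ Y)|
      ≤ ∫ Q : ℝ, |(∫ Y : ℝ, Real.exp (-Q ^ 4) * Real.cos (Q * (U - Y * a)) * Δ₀ Y)
          - ∫ Y : ℝ, Real.exp (-Q ^ 4) * Real.cos (Q * U) * Δ₀ Y| := by
        simpa [Real.norm_eq_abs] using norm_integral_le_integral_norm
          (fun Q : ℝ => (∫ Y : ℝ, Real.exp (-Q ^ 4) * Real.cos (Q * (U - Y * a)) * Δ₀ Y)
            - ∫ Y : ℝ, Real.exp (-Q ^ 4) * Real.cos (Q * U) * Δ₀ Y)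
    _ ≤ ∫ Q : ℝ, Real.exp (-Q ^ 4) *
          ∫ Y : ℝ, ‖
            (Complex.exp (-Complex.I * (Q : ℂ) * (Y : ℂ) * ((a : ℝ) : ℂ)) - 1)‖ * |Δ₀ Y| := by
        refine integral_mono_of_nonneg (Filter.Eventually.of_forall fun Q => abs_nonneg _)
          hrhs_int (Filter.Eventually.of_forall fun Q => ?_)
        calc |(∫ Y : ℝ, Real.exp (-Q ^ 4) * Real.cos (Q * (U - Y * a)) * Δ₀ Y)
              - ∫ Y : ℝ, Real.exp (-Q ^ 4) * Real.cos (Q * U) * Δ₀ Y|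
            = |∫ Y : ℝ, (Real.exp (-Q ^ 4) * Real.cos (Q * (U - Y * a)) * Δ₀ Y
                - Real.exp (-Q ^ 4) * Real.cos (Q * U) * Δ₀ Y)| := by
              rw [integral_sub (hfQ Q) (hgQ Q)]
          _ ≤ ∫ Y : ℝ, |Real.exp (-Q ^ 4) * Real.cos (Q * (U - Y * a)) * Δ₀ Y
                - Real.exp (-Q ^ 4) * Real.cos (Q * U) * Δ₀ Y| := by
              simpa [Real.norm_eq_abs] using norm_integral_le_integral_norm
                (fun Y : ℝ => Real.exp (-Q ^ 4) * Real.cos (Q * (U - Y * a)) * Δ₀ Y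
                  - Real.exp (-Q ^ 4) * Real.cos (Q * U) * Δ₀ Y)
          _ ≤ ∫ Y : ℝ, Real.exp (-Q ^ 4) *
                (‖ (Complex.exp (-Complex.I * (Q : ℂ) * (Y : ℂ) * ((a : ℝ) : ℂ)) - 1)‖
                  * |Δ₀ Y|) :=
              integral_mono_of_nonneg (Filter.Eventually.of_forall fun Y => abs_nonneg _)
                (hHHQ Q) (Filter.Eventually.of_forall fun Y => hptw Q Y)
          _ = Real.exp (-Q ^ 4) *
                ∫ Y : ℝ, ‖
                  (Complex.exp (-Complex.I * (Q : ℂ) * (Y : ℂ) * ((a : ℝ) : ℂ)) - 1)‖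
                  * |Δ₀ Y| := integral_const_mul _ _
end

section
/- Main convergence theorem (linear case): let Δ₀ : ℝ → ℝ be Lebesgue integrable with nonzero algebraic volume M₀ = ∫_ℝ Δ₀(Y) dY ≠ 0, and define Δ(X,T) = ∫_ℝ G(X−Y,T) Δ₀(Y) dY for T > 0. Then the rescaled solution converges uniformly in time to the universal self-similar attractor φ: lim_{T→∞} sup_{U∈ℝ} |T^{1/4} · Δ(U·T^{1/4}, T)/M₀ − φ(U)| = 0. -/
open MeasureTheory Real Filter

open Topology

lemma abs_cos_sub_cos_le (a b : ℝ) : |Real.cos a - Real.cos b| ≤ |a - b| := by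
  rw [Real.cos_sub_cos]
  rw [abs_mul, abs_mul]
  have h1 : |Real.sin ((a + b) / 2)| ≤ 1 := Real.abs_sin_le_one _
  have h2 : |Real.sin ((a - b) / 2)| ≤ |(a - b) / 2| := Real.abs_sin_le_abs
  have : |(-2 : ℝ)| = 2 := by norm_num
  rw [this]
  calc 2 * |Real.sin ((a + b) / 2)| * |Real.sin ((a - b) / 2)|
      ≤ 2 * 1 * |(a - b) / 2| := by
        apply mul_le_mul (by nlinarith [abs_nonneg (Real.sin ((a+b)/2))]) h2 (abs_nonneg _)
        norm_num
    _ = |a - b| := by rw [abs_div, abs_two]; ring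

lemma integrable_exp_negq : Integrable (fun x : ℝ => Real.exp (-x ^ 4)) := by
  refine ((integrable_exp_neg_mul_sq one_pos).const_mul (Real.exp 1)).mono'
    (Real.continuous_exp.comp (continuous_pow 4).neg).aestronglyMeasurable ?_
  filter_upwards with x
  rw [Real.norm_of_nonneg (Real.exp_pos _).le, ← Real.exp_add]
  exact Real.exp_le_exp.2 (by nlinarith [sq_nonneg (x ^ 2 - 1)])

lemma integrable_abs_exp_negq : Integrable (fun x : ℝ => |x| * Real.exp (-x ^ 4)) := by
  refine ((integrable_exp_neg_mul_sq one_pos).const_mul (Real.exp 2)).mono'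
    (continuous_abs.mul (Real.continuous_exp.comp (continuous_pow 4).neg)).aestronglyMeasurable ?_
  filter_upwards with x
  rw [Real.norm_of_nonneg (mul_nonneg (abs_nonneg _) (Real.exp_pos _).le), ← Real.exp_add]
  have h1 : |x| ≤ Real.exp |x| := (Real.add_one_le_exp |x|).trans' (by linarith [abs_nonneg x])
  calc |x| * Real.exp (-x ^ 4) ≤ Real.exp |x| * Real.exp (-x ^ 4) :=
        mul_le_mul_of_nonneg_right h1 (Real.exp_pos _).le
    _ = Real.exp (|x| + -x ^ 4) := (Real.exp_add _ _).symm
    _ ≤ Real.exp (2 + -1 * x ^ 2) := by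
        apply Real.exp_le_exp.2
        nlinarith [sq_nonneg (x ^ 2 - 1), sq_nonneg (|x| - 1), sq_abs x]

lemma integrable_phi_integrand (U : ℝ) :
    Integrable (fun Q : ℝ => Real.exp (-Q ^ 4) * Real.cos (Q * U)) := by
  refine integrable_exp_negq.mono'
    ((Real.continuous_exp.comp (continuous_pow 4).neg).mul
      (Real.continuous_cos.comp (continuous_id.mul continuous_const))).aestronglyMeasurable ?_
  filter_upwards with x
  rw [Real.norm_eq_abs, abs_mul, abs_of_nonneg (Real.exp_pos _).le]
  exact mul_le_of_le_one_right (Real.exp_pos _).le (Real.abs_cos_le_one _)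

/-- bound constant -/
noncomputable def phiC : ℝ := (1 / (2 * Real.pi)) * ∫ Q : ℝ, Real.exp (-Q ^ 4)

/-- Lipschitz constant -/
noncomputable def phiL : ℝ := (1 / (2 * Real.pi)) * ∫ Q : ℝ, |Q| * Real.exp (-Q ^ 4)

lemma inv2pi_pos : (0:ℝ) < 1 / (2 * Real.pi) := by positivity

lemma phiC_nonneg : 0 ≤ phiC :=
  mul_nonneg inv2pi_pos.le (integral_nonneg fun x => (Real.exp_pos _).le)

lemma phiL_nonneg : 0 ≤ phiL :=
  mul_nonneg inv2pi_pos.le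
    (integral_nonneg fun x => mul_nonneg (abs_nonneg _) (Real.exp_pos _).le)

lemma abs_phiFn_le (U : ℝ) : |phiFn U| ≤ phiC := by
  rw [phiFn, abs_mul, abs_of_nonneg inv2pi_pos.le, phiC]
  refine mul_le_mul_of_nonneg_left ?_ inv2pi_pos.le
  calc |∫ Q : ℝ, Real.exp (-Q ^ 4) * Real.cos (Q * U)|
      ≤ ∫ Q : ℝ, ‖Real.exp (-Q ^ 4) * Real.cos (Q * U)‖ := (Real.norm_eq_abs _) ▸ norm_integral_le_integral_norm _
    _ ≤ ∫ Q : ℝ, Real.exp (-Q ^ 4) := by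
        refine integral_mono (integrable_phi_integrand U).norm integrable_exp_negq fun x => ?_
        rw [Real.norm_eq_abs, abs_mul, abs_of_nonneg (Real.exp_pos _).le]
        exact mul_le_of_le_one_right (Real.exp_pos _).le (Real.abs_cos_le_one _)

lemma abs_phiFn_sub_le (a b : ℝ) : |phiFn a - phiFn b| ≤ phiL * |a - b| := by
  rw [phiFn, phiFn, ← mul_sub,
    ← integral_sub (integrable_phi_integrand a) (integrable_phi_integrand b)]
  rw [abs_mul, abs_of_nonneg inv2pi_pos.le, phiL, mul_assoc]
  refine mul_le_mul_of_nonneg_left ?_ inv2pi_pos.le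
  calc |∫ Q : ℝ, (Real.exp (-Q ^ 4) * Real.cos (Q * a) - Real.exp (-Q ^ 4) * Real.cos (Q * b))|
      ≤ ∫ Q : ℝ, ‖Real.exp (-Q ^ 4) * Real.cos (Q * a) - Real.exp (-Q ^ 4) * Real.cos (Q * b)‖ :=
        (Real.norm_eq_abs _) ▸ norm_integral_le_integral_norm _
    _ ≤ ∫ Q : ℝ, (|Q| * Real.exp (-Q ^ 4)) * |a - b| := by
        refine integral_mono ((integrable_phi_integrand a).sub
          (integrable_phi_integrand b)).norm (integrable_abs_exp_negq.mul_const _) fun x => ?_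
        rw [Real.norm_eq_abs, ← mul_sub, abs_mul, abs_of_nonneg (Real.exp_pos _).le]
        calc Real.exp (-x ^ 4) * |Real.cos (x * a) - Real.cos (x * b)|
            ≤ Real.exp (-x ^ 4) * |x * a - x * b| :=
              mul_le_mul_of_nonneg_left (_root_.abs_cos_sub_cos_le _ _) (Real.exp_pos _).le
          _ = (|x| * Real.exp (-x ^ 4)) * |a - b| := by
              rw [← mul_sub, abs_mul]; ring
    _ = (∫ Q : ℝ, |Q| * Real.exp (-Q ^ 4)) * |a - b| := integral_mul_const _ _

lemma phiFn_continuous : Continuous phiFn := by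
  have : LipschitzWith phiL.toNNReal phiFn := by
    refine LipschitzWith.of_dist_le_mul fun x y => ?_
    rw [Real.dist_eq, Real.dist_eq, Real.coe_toNNReal _ phiL_nonneg]
    exact abs_phiFn_sub_le x y
  exact this.continuous

lemma greenFn_scaling {T : ℝ} (X : ℝ) (hT : 0 < T) :
    greenFn X T = T ^ (-(1/4) : ℝ) * phiFn (X * T ^ (-(1/4) : ℝ)) := by
  have hTq : (T ^ ((1/4):ℝ)) ^ (4:ℕ) = T := by
    rw [← Real.rpow_natCast (T ^ ((1/4):ℝ)) 4, ← Real.rpow_mul hT.le]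
    norm_num
  have hs : T ^ ((1/4):ℝ) * T ^ (-(1/4):ℝ) = 1 := by
    rw [← Real.rpow_add hT]; norm_num
  have hkey : ∀ K : ℝ, Real.exp (-K ^ 4 * T) * Real.cos (K * X)
      = (fun Q : ℝ => Real.exp (-Q ^ 4) * Real.cos (Q * (X * T ^ (-(1/4):ℝ))))
        (T ^ ((1/4):ℝ) * K) := by
    intro K
    simp only
    rw [mul_pow, hTq,
      show (T ^ ((1/4):ℝ) * K) * (X * T ^ (-(1/4):ℝ))
        = (T ^ ((1/4):ℝ) * T ^ (-(1/4):ℝ)) * (K * X) from by ring, hs, one_mul,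
      show -(T * K ^ 4) = -K ^ 4 * T from by ring]
  have hcv : (∫ K : ℝ, Real.exp (-K ^ 4 * T) * Real.cos (K * X))
      = T ^ (-(1/4):ℝ) * ∫ Q : ℝ, Real.exp (-Q ^ 4) * Real.cos (Q * (X * T ^ (-(1/4):ℝ))) := by
    rw [show (fun K : ℝ => Real.exp (-K ^ 4 * T) * Real.cos (K * X))
        = fun K : ℝ => (fun Q : ℝ => Real.exp (-Q ^ 4) * Real.cos (Q * (X * T ^ (-(1/4):ℝ))))
          (T ^ ((1/4):ℝ) * K) from funext hkey]
    rw [MeasureTheory.Measure.integral_comp_mul_left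
      (fun Q : ℝ => Real.exp (-Q ^ 4) * Real.cos (Q * (X * T ^ (-(1/4):ℝ)))) (T ^ ((1/4):ℝ))]
    rw [smul_eq_mul, show |(T ^ ((1/4):ℝ))⁻¹| = T ^ (-(1/4):ℝ) from by
      rw [Real.rpow_neg hT.le]
      exact abs_of_nonneg (inv_nonneg.2 (Real.rpow_nonneg hT.le _))]
  rw [greenFn, hcv, phiFn]
  ring


/-- Main convergence theorem (linear case): for a Lebesgue integrable initial profile `Δ₀`
with nonzero algebraic volume `M₀`, and `Δ(X,T) = ∫ Y, G(X−Y,T) Δ₀(Y) dY`, the rescaled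
solution `U ↦ T^{1/4} Δ(U T^{1/4}, T)/M₀` converges uniformly in `U`, as `T → ∞`, to the
universal self-similar attractor `φ`. -/
theorem uniform_convergence_to_attractor (Δ₀ : ℝ → ℝ) (hΔ₀ : Integrable Δ₀)
    (M₀ : ℝ) (hM₀ : M₀ = ∫ Y : ℝ, Δ₀ Y) (hM₀_ne : M₀ ≠ 0)
    (Δ : ℝ → ℝ → ℝ) (hΔ : ∀ X T : ℝ, Δ X T = ∫ Y : ℝ, greenFn (X - Y) T * Δ₀ Y) :
    TendstoUniformly
      (fun (T : ℝ) (U : ℝ) => T ^ ((1 / 4 : ℝ)) * Δ (U * T ^ ((1 / 4 : ℝ))) T / M₀)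
      phiFn atTop := by

  set B : ℝ := 2 * phiC with hBdef
  have hBnn : 0 ≤ B := by
    have := phiC_nonneg; positivity
  set g : ℝ → ℝ → ℝ := fun s Y => min B (phiL * s * |Y|) * |Δ₀ Y| with hgdef
  have hgmeas : ∀ s : ℝ, AEStronglyMeasurable (fun Y => g s Y) volume := fun s =>
    ((continuous_const.min ((continuous_const.mul continuous_abs))).aestronglyMeasurable).mul
      hΔ₀.1.norm
  have hgnn : ∀ s Y : ℝ, 0 ≤ s → 0 ≤ min B (phiL * s * |Y|) := fun s Y hs =>
    le_min hBnn (mul_nonneg (mul_nonneg phiL_nonneg hs) (abs_nonneg Y))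
  have hgint : ∀ s : ℝ, 0 ≤ s → Integrable (fun Y => g s Y) := by
    intro s hs
    refine hΔ₀.abs.bdd_mul (c := B)
      ((continuous_const.min (continuous_const.mul continuous_abs)).aestronglyMeasurable)
      (Filter.Eventually.of_forall fun Y => ?_)
    rw [Real.norm_eq_abs, abs_of_nonneg (hgnn s Y hs)]
    exact min_le_left _ _
  have herr : Tendsto (fun T : ℝ => ∫ Y, g (T ^ (-(1/4):ℝ)) Y) atTop (𝓝 0) := by
    have h0 : (0:ℝ) = ∫ _ : ℝ, (0:ℝ) := by simp
    rw [h0]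
    apply tendsto_integral_filter_of_dominated_convergence (fun Y => B * |Δ₀ Y|)
    · filter_upwards with T using hgmeas _
    · filter_upwards [eventually_ge_atTop (1:ℝ)] with T hT
      filter_upwards with Y
      have hs : (0:ℝ) ≤ T ^ (-(1/4):ℝ) := Real.rpow_nonneg (by linarith) _
      rw [Real.norm_eq_abs, hgdef, abs_mul, abs_of_nonneg (hgnn _ Y hs), abs_abs]
      exact mul_le_mul_of_nonneg_right (min_le_left _ _) (abs_nonneg _)
    · exact hΔ₀.abs.const_mul B
    · filter_upwards with Y
      have h1 : Tendsto (fun T : ℝ => phiL * T ^ (-(1/4):ℝ) * |Y|) atTop (𝓝 0) := by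
        have h2 := tendsto_rpow_neg_atTop (show (0:ℝ) < 1/4 by norm_num)
        have h3 := (h2.const_mul phiL).mul_const |Y|
        simpa using h3
      have hmin : Tendsto (fun T : ℝ => min B (phiL * T ^ (-(1/4):ℝ) * |Y|)) atTop
          (𝓝 (min B 0)) := tendsto_const_nhds.min h1
      rw [min_eq_right hBnn] at hmin
      simpa using hmin.mul_const |Δ₀ Y|
  rw [Metric.tendstoUniformly_iff]
  intro ε hε
  have hM : 0 < |M₀| := abs_pos.2 hM₀_ne
  have hev : ∀ᶠ T in atTop, (∫ Y, g (T ^ (-(1/4):ℝ)) Y) < ε * |M₀| :=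
    herr.eventually_lt_const (by positivity)
  filter_upwards [hev, eventually_gt_atTop (0:ℝ)] with T hT1 hT0 U
  set s := T ^ (-(1/4):ℝ) with hsdef
  have hs0 : (0:ℝ) ≤ s := Real.rpow_nonneg hT0.le _
  have hTs : T ^ ((1/4):ℝ) * s = 1 := by
    rw [hsdef, ← Real.rpow_add hT0]; norm_num
  have hint : ∀ c : ℝ, Integrable (fun Y => phiFn (c - Y * s) * Δ₀ Y) := fun c =>
    hΔ₀.bdd_mul (c := phiC) ((phiFn_continuous.comp
      (continuous_const.sub (continuous_id.mul continuous_const))).aestronglyMeasurable)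
      (Filter.Eventually.of_forall fun Y => (Real.norm_eq_abs _) ▸ abs_phiFn_le _)
  have hid : T ^ ((1/4):ℝ) * Δ (U * T ^ ((1/4):ℝ)) T = ∫ Y, phiFn (U - Y * s) * Δ₀ Y := by
    rw [hΔ]
    have hpt : ∀ Y : ℝ, greenFn (U * T ^ ((1/4):ℝ) - Y) T * Δ₀ Y
        = s * (phiFn (U - Y * s) * Δ₀ Y) := by
      intro Y
      rw [greenFn_scaling _ hT0]
      rw [show (U * T ^ ((1/4):ℝ) - Y) * T ^ (-(1/4):ℝ)
          = U * (T ^ ((1/4):ℝ) * s) - Y * s from by rw [hsdef]; ring, hTs, mul_one]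
      rw [hsdef]; ring
    simp only [hpt]
    rw [integral_const_mul, ← mul_assoc, hTs, one_mul]
  have hsub : (∫ Y, (phiFn (U - Y * s) - phiFn U) * Δ₀ Y)
      = (∫ Y, phiFn (U - Y * s) * Δ₀ Y) - phiFn U * M₀ := by
    simp_rw [sub_mul]
    rw [integral_sub (hint U) (hΔ₀.const_mul _), integral_const_mul, ← hM₀]
  rw [Real.dist_eq, hid,
    show phiFn U - (∫ Y, phiFn (U - Y * s) * Δ₀ Y) / M₀
      = -((∫ Y, (phiFn (U - Y * s) - phiFn U) * Δ₀ Y) / M₀) from by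
        rw [hsub, sub_div, mul_div_cancel_right₀ _ hM₀_ne]; ring, abs_neg, abs_div]
  rw [div_lt_iff₀ hM]
  calc |∫ Y, (phiFn (U - Y * s) - phiFn U) * Δ₀ Y|
      ≤ ∫ Y, ‖(phiFn (U - Y * s) - phiFn U) * Δ₀ Y‖ :=
        (Real.norm_eq_abs _) ▸ norm_integral_le_integral_norm _
    _ ≤ ∫ Y, g s Y := by
        refine integral_mono_of_nonneg (Filter.Eventually.of_forall fun Y => norm_nonneg _)
          (hgint s hs0) (Filter.Eventually.of_forall fun Y => ?_)
        simp only [Real.norm_eq_abs, abs_mul, hgdef]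
        refine mul_le_mul_of_nonneg_right (le_min ?_ ?_) (abs_nonneg _)
        · calc |phiFn (U - Y * s) - phiFn U| ≤ |phiFn (U - Y * s)| + |phiFn U| := abs_sub _ _
            _ ≤ phiC + phiC := add_le_add (abs_phiFn_le _) (abs_phiFn_le _)
            _ = B := by rw [hBdef]; ring
        · calc |phiFn (U - Y * s) - phiFn U| ≤ phiL * |U - Y * s - U| := abs_phiFn_sub_le _ _
            _ = phiL * s * |Y| := by
                rw [show U - Y * s - U = -(Y * s) from by ring, abs_neg, abs_mul,
                  abs_of_nonneg hs0]
                ring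
    _ < ε * |M₀| := hT1
end

section
/- General diffusive-like kernel result: let α > 0 and β > 0 be real numbers, let φ : ℝ → ℝ be bounded and uniformly continuous, let Δ₀ : ℝ → ℝ be Lebesgue integrable with M₀ = ∫_ℝ Δ₀(Y) dY, and define Δ(X,T) = ∫_ℝ T^{−β} φ((X−Y)·T^{−α}) Δ₀(Y) dY for T > 0. Then lim_{T→∞} sup_{U∈ℝ} |T^{β} · Δ(U·T^{α}, T) − M₀ · φ(U)| = 0. -/
open MeasureTheory Real Filter Topology

/-- General diffusive-like kernel result: if the Green's function is self-similar of the
form `G(X,T) = T^{−β} φ(X T^{−α})` with `α, β > 0` and `φ` bounded and uniformly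
continuous, then for any integrable initial profile `Δ₀` of algebraic volume `M₀`, the
rescaled solution `U ↦ T^{β} Δ(U T^{α}, T)` converges uniformly, as `T → ∞`,
to `M₀ · φ`. -/
theorem general_selfsimilar_kernel_uniform_convergence
    (α β : ℝ) (hα : 0 < α) (hβ : 0 < β)
    (φ : ℝ → ℝ) (hφ_bdd : ∃ C : ℝ, ∀ x : ℝ, |φ x| ≤ C) (hφ_uc : UniformContinuous φ)
    (Δ₀ : ℝ → ℝ) (hΔ₀ : Integrable Δ₀)
    (M₀ : ℝ) (hM₀ : M₀ = ∫ Y : ℝ, Δ₀ Y)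
    (Δ : ℝ → ℝ → ℝ)
    (hΔ : ∀ (X : ℝ) (T : ℝ), 0 < T →
      Δ X T = ∫ Y : ℝ, T ^ (-β) * φ ((X - Y) * T ^ (-α)) * Δ₀ Y) :
    TendstoUniformly
      (fun (T : ℝ) (U : ℝ) => T ^ β * Δ (U * T ^ α) T)
      (fun U => M₀ * φ U) atTop := by
  obtain ⟨C, hC⟩ := hφ_bdd
  have hC0 : 0 ≤ C := le_trans (abs_nonneg _) (hC 0)
  have hφc : Continuous φ := hφ_uc.continuous
  rw [Metric.tendstoUniformly_iff]
  intro ε hε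
  set I : ℝ := ∫ Y : ℝ, |Δ₀ Y| with hI
  have hI0 : 0 ≤ I := integral_nonneg fun Y => abs_nonneg _
  set ε' : ℝ := ε / (2 * (I + 1)) with hε'
  have hε'pos : 0 < ε' := by positivity
  obtain ⟨δ, hδpos, hδ⟩ := Metric.uniformContinuous_iff.mp hφ_uc ε' hε'pos
  set g : ℝ → ℝ → ℝ := fun T Y => if |Y| * T ^ (-α) < δ then ε' else 2 * C with hg
  have hgmeas : ∀ T : ℝ, Measurable (g T) := by
    intro T
    exact Measurable.ite
      (measurableSet_lt ((measurable_abs).mul_const _) measurable_const)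
      measurable_const measurable_const
  have hgbd : ∀ T Y : ℝ, |g T Y| ≤ ε' + 2 * C := by
    intro T Y
    simp only [hg]
    split
    · rw [abs_of_pos hε'pos]; linarith
    · rw [abs_of_nonneg (by linarith : (0:ℝ) ≤ 2 * C)]; linarith
  have hgnn : ∀ T Y : ℝ, 0 ≤ g T Y := by
    intro T Y
    simp only [hg]
    split
    · exact hε'pos.le
    · linarith
  have hΔabs : Integrable (fun Y => |Δ₀ Y|) := hΔ₀.abs
  have hgint : ∀ T : ℝ, Integrable (fun Y => g T Y * |Δ₀ Y|) := by
    intro T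
    exact hΔabs.bdd_mul (c := ε' + 2 * C) (hgmeas T).aestronglyMeasurable
      (ae_of_all _ fun Y => by simpa using hgbd T Y)
  -- dominated convergence: ∫ g T Y |Δ₀ Y| → ε' * I
  have hDCT : Tendsto (fun T : ℝ => ∫ Y : ℝ, g T Y * |Δ₀ Y|) atTop
      (𝓝 (∫ Y : ℝ, ε' * |Δ₀ Y|)) := by
    apply tendsto_integral_filter_of_dominated_convergence
      (fun Y => (ε' + 2 * C) * |Δ₀ Y|)
    · filter_upwards with T
      exact ((hgmeas T).aestronglyMeasurable.mul hΔabs.1)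
    · filter_upwards with T
      filter_upwards with Y
      rw [Real.norm_eq_abs, abs_mul, abs_abs]
      exact mul_le_mul_of_nonneg_right (hgbd T Y) (abs_nonneg _)
    · exact hΔabs.const_mul _
    · filter_upwards with Y
      have h0 : Tendsto (fun T : ℝ => |Y| * T ^ (-α)) atTop (𝓝 (|Y| * 0)) :=
        (tendsto_rpow_neg_atTop hα).const_mul _
      rw [mul_zero] at h0
      have hev : ∀ᶠ T : ℝ in atTop, g T Y * |Δ₀ Y| = ε' * |Δ₀ Y| := by
        filter_upwards [h0.eventually_lt_const hδpos] with T hT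
        simp only [hg, if_pos hT]
      exact Tendsto.congr' (hev.mono fun T h => h.symm) tendsto_const_nhds
  have hlim : (∫ Y : ℝ, ε' * |Δ₀ Y|) < ε := by
    rw [integral_const_mul]
    have : ε' * I ≤ ε' * (I + 1) := by nlinarith
    have h2 : ε' * (I + 1) = ε / 2 := by
      rw [hε', div_mul_eq_mul_div, mul_div_mul_right _ _ (by linarith : (I + 1) ≠ 0)]
    calc ε' * I ≤ ε / 2 := by rw [← h2]; exact this
    _ < ε := by linarith
  have hev : ∀ᶠ T : ℝ in atTop, (∫ Y : ℝ, g T Y * |Δ₀ Y|) < ε :=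
    hDCT.eventually_lt_const hlim
  filter_upwards [hev, eventually_gt_atTop (0:ℝ)] with T hTlt hT
  intro U
  rw [Real.dist_eq]
  have hTα : (0:ℝ) < T ^ (-α) := rpow_pos_of_pos hT _
  -- rewrite the rescaled solution
  have hββ : T ^ β * T ^ (-β) = 1 := by
    rw [← rpow_add hT]; simp
  have hαα : T ^ α * T ^ (-α) = 1 := by
    rw [← rpow_add hT]; simp
  have hint1 : Integrable (fun Y => φ (U - Y * T ^ (-α)) * Δ₀ Y) := by
    refine hΔ₀.bdd_mul (c := C) ?_ (ae_of_all _ fun Y => by simpa using hC _)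
    exact (hφc.comp (by continuity)).aestronglyMeasurable
  have hsol : T ^ β * Δ (U * T ^ α) T = ∫ Y : ℝ, φ (U - Y * T ^ (-α)) * Δ₀ Y := by
    rw [hΔ _ _ hT, ← integral_const_mul]
    congr 1
    funext Y
    have harg : (U * T ^ α - Y) * T ^ (-α) = U - Y * T ^ (-α) := by
      have : U * T ^ α * T ^ (-α) = U := by
        rw [mul_assoc, hαα, mul_one]
      ring_nf
      nlinarith [this]
    rw [harg]
    calc T ^ β * (T ^ (-β) * φ (U - Y * T ^ (-α)) * Δ₀ Y)
        = (T ^ β * T ^ (-β)) * (φ (U - Y * T ^ (-α)) * Δ₀ Y) := by ring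
      _ = φ (U - Y * T ^ (-α)) * Δ₀ Y := by rw [hββ, one_mul]
  have hM : M₀ * φ U = ∫ Y : ℝ, φ U * Δ₀ Y := by
    rw [integral_const_mul, hM₀]; ring
  rw [hsol, hM, ← integral_sub (hΔ₀.const_mul _) hint1]
  have habs : |∫ Y : ℝ, (φ U * Δ₀ Y - φ (U - Y * T ^ (-α)) * Δ₀ Y)|
      ≤ ∫ Y : ℝ, g T Y * |Δ₀ Y| := by
    have h1 : |∫ Y : ℝ, (φ U * Δ₀ Y - φ (U - Y * T ^ (-α)) * Δ₀ Y)|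
        ≤ ∫ Y : ℝ, |φ U * Δ₀ Y - φ (U - Y * T ^ (-α)) * Δ₀ Y| := by
      rw [← Real.norm_eq_abs]
      exact (norm_integral_le_integral_norm _).trans (le_of_eq (by
        simp [Real.norm_eq_abs]))
    refine h1.trans ?_
    apply integral_mono ((hΔ₀.const_mul _).sub hint1).abs (hgint T)
    intro Y
    simp only [Pi.sub_apply]
    have : φ U * Δ₀ Y - φ (U - Y * T ^ (-α)) * Δ₀ Y
        = (φ U - φ (U - Y * T ^ (-α))) * Δ₀ Y := by ring
    rw [this, abs_mul]
    apply mul_le_mul_of_nonneg_right _ (abs_nonneg _)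
    simp only [hg]
    split
    · rename_i hlt
      have : dist U (U - Y * T ^ (-α)) < δ := by
        rw [Real.dist_eq]
        have : |U - (U - Y * T ^ (-α))| = |Y| * T ^ (-α) := by
          rw [show U - (U - Y * T ^ (-α)) = Y * T ^ (-α) by ring, abs_mul,
            abs_of_pos hTα]
        rw [this]; exact hlt
      have := hδ this
      rw [Real.dist_eq] at this
      exact this.le
    · calc |φ U - φ (U - Y * T ^ (-α))| ≤ |φ U| + |φ (U - Y * T ^ (-α))| :=
          abs_sub _ _
        _ ≤ 2 * C := by linarith [hC U, hC (U - Y * T ^ (-α))]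
  exact lt_of_le_of_lt habs hTlt
end

section
/- Stepped initial film: let θ₀ be a real number and Δ₀ : ℝ → ℝ the step profile Δ₀(Y) = θ₀ for Y ≥ 0 and Δ₀(Y) = 0 for Y < 0. Then the solution Δ(X,T) = ∫_ℝ G(X−Y,T) Δ₀(Y) dY (well defined since G(·,T) is integrable and Δ₀ is bounded) satisfies, for every T > 0 and real X, Δ(X,T) = (θ₀/2) · (1 + (1/π) ∫_ℝ exp(−Q⁴) · sin(Q·X·T^{−1/4})/Q dQ); in particular Δ(X,T) depends on (X,T) only through the self-similar variable U = X·T^{−1/4}, so the stepped-film solution is self-similar at all positive times. -/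
open MeasureTheory Real
open FourierTransform Complex

lemma integrable_pow_quartic {T : ℝ} (hT : 0 < T) (n : ℕ) :
    Integrable (fun K : ℝ => K ^ n * Real.exp (-K ^ 4 * T)) := by
  have key : ∀ K : ℝ, |K| ^ n * rexp (-K ^ 4 * T) ≤
      ((1 + (2 * n / T) ^ n) * rexp (T / 2)) * rexp (-(T / 2) * K ^ 2) := by
    intro K
    have hK4 : (0:ℝ) ≤ K ^ 4 := by positivity
    have e1 : |K| ^ n ≤ 1 + (2 * n / T) ^ n * rexp (T * K ^ 4 / 2) := by
      rcases Nat.eq_zero_or_pos n with rfl | hn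
      · simp
        linarith [Real.exp_pos (T * K ^ 4 / 2)]
      rcases le_total (|K|) 1 with h | h
      · have h0 : |K| ^ n ≤ 1 := pow_le_one₀ (abs_nonneg K) h
        have pos : (0:ℝ) ≤ (2 * n / T) ^ n * rexp (T * K ^ 4 / 2) := by positivity
        linarith
      · have hn' : (0:ℝ) < n := by exact_mod_cast hn
        set y : ℝ := T * K ^ 4 / (2 * n) with hy
        have hy0 : 0 ≤ y := by positivity
        have h1 : y ≤ rexp y := by linarith [Real.add_one_le_exp y]
        have h2 : y ^ n ≤ rexp y ^ n := pow_le_pow_left₀ hy0 h1 n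
        have hn0 : (n:ℝ) ≠ 0 := ne_of_gt hn'
        have h3 : rexp y ^ n = rexp (T * K ^ 4 / 2) := by
          rw [← Real.exp_nat_mul]
          congr 1
          rw [hy]
          field_simp
        have h4 : (K ^ 4) ^ n = (2 * n / T) ^ n * y ^ n := by
          rw [← mul_pow]
          congr 1
          rw [hy]
          field_simp
        have h5 : |K| ^ n ≤ (K ^ 4) ^ n := by
          calc |K| ^ n ≤ |K| ^ (4 * n) := pow_le_pow_right₀ h (by omega)
            _ = (K ^ 4) ^ n := by rw [pow_mul, ← _root_.abs_pow, _root_.abs_of_nonneg hK4]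
        have pos2 : (0:ℝ) ≤ (2 * n / T) ^ n := by positivity
        calc |K| ^ n ≤ (K ^ 4) ^ n := h5
          _ = (2 * n / T) ^ n * y ^ n := h4
          _ ≤ (2 * n / T) ^ n * rexp (T * K ^ 4 / 2) := by
              rw [← h3]; exact mul_le_mul_of_nonneg_left h2 pos2
          _ ≤ 1 + (2 * n / T) ^ n * rexp (T * K ^ 4 / 2) := by linarith
    have e2 : rexp (-K ^ 4 * T) ≤ rexp (-(T * K ^ 4) / 2) := by
      apply Real.exp_le_exp.2; nlinarith
    have e3 : rexp (T * K ^ 4 / 2) * rexp (-K ^ 4 * T) = rexp (-(T * K ^ 4) / 2) := by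
      rw [← Real.exp_add]; congr 1; ring
    have e4 : rexp (-(T * K ^ 4) / 2) ≤ rexp (T / 2) * rexp (-(T / 2) * K ^ 2) := by
      rw [← Real.exp_add]; apply Real.exp_le_exp.2; nlinarith [sq_nonneg (K ^ 2 - 1)]
    have pos2 : (0:ℝ) ≤ (2 * n / T) ^ n := by positivity
    calc |K| ^ n * rexp (-K ^ 4 * T)
        ≤ (1 + (2 * n / T) ^ n * rexp (T * K ^ 4 / 2)) * rexp (-K ^ 4 * T) :=
          mul_le_mul_of_nonneg_right e1 (Real.exp_pos _).le
      _ = rexp (-K ^ 4 * T) + (2 * n / T) ^ n * (rexp (T * K ^ 4 / 2) * rexp (-K ^ 4 * T)) := by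
          ring
      _ = rexp (-K ^ 4 * T) + (2 * n / T) ^ n * rexp (-(T * K ^ 4) / 2) := by rw [e3]
      _ ≤ rexp (-(T * K ^ 4) / 2) + (2 * n / T) ^ n * rexp (-(T * K ^ 4) / 2) := by linarith
      _ = (1 + (2 * n / T) ^ n) * rexp (-(T * K ^ 4) / 2) := by ring
      _ ≤ (1 + (2 * n / T) ^ n) * (rexp (T / 2) * rexp (-(T / 2) * K ^ 2)) := by
          apply mul_le_mul_of_nonneg_left e4; positivity
      _ = ((1 + (2 * n / T) ^ n) * rexp (T / 2)) * rexp (-(T / 2) * K ^ 2) := by ring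
  refine Integrable.mono'
    ((integrable_exp_neg_mul_sq (half_pos hT)).const_mul ((1 + (2 * n / T) ^ n) * rexp (T / 2)))
    ?_ (ae_of_all _ fun K => ?_)
  · exact (Continuous.mul (continuous_pow n) (Real.continuous_exp.comp (by fun_prop))).aestronglyMeasurable
  · rw [norm_mul, norm_pow, Real.norm_eq_abs, Real.norm_eq_abs,
      _root_.abs_of_nonneg (Real.exp_pos _).le]
    exact key K

section core
variable {T : ℝ}

-- real functions
noncomputable def hR (T : ℝ) : ℝ → ℝ := fun K => rexp (-K ^ 4 * T)
noncomputable def h1R (T : ℝ) : ℝ → ℝ := fun K => (-(4 * T) * K ^ 3) * rexp (-K ^ 4 * T)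
noncomputable def h2R (T : ℝ) : ℝ → ℝ :=
  fun K => (16 * T ^ 2 * K ^ 6 - 12 * T * K ^ 2) * rexp (-K ^ 4 * T)
noncomputable def hC (T : ℝ) : ℝ → ℂ := fun K => ((hR T K : ℝ) : ℂ)
noncomputable def h1C (T : ℝ) : ℝ → ℂ := fun K => ((h1R T K : ℝ) : ℂ)
noncomputable def h2C (T : ℝ) : ℝ → ℂ := fun K => ((h2R T K : ℝ) : ℂ)

lemma hasDerivAt_hR (K : ℝ) : HasDerivAt (hR T) (h1R T K) K := by
  have h : HasDerivAt (fun x : ℝ => -x ^ 4 * T) (-(4 * K ^ 3) * T) K := by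
    have := ((hasDerivAt_pow 4 K).neg).mul_const T
    exact this.congr_deriv (by norm_num)
  have := h.exp
  exact this.congr_deriv (by unfold h1R; ring)

lemma hasDerivAt_h1R (K : ℝ) : HasDerivAt (h1R T) (h2R T K) K := by
  have ha : HasDerivAt (fun x : ℝ => -(4 * T) * x ^ 3) (-(4 * T) * (3 * K ^ 2)) K := by
    have := (hasDerivAt_pow 3 K).const_mul (-(4 * T))
    exact this.congr_deriv (by norm_num)
  have := ha.mul (hasDerivAt_hR (T := T) K)
  exact this.congr_deriv (by unfold h1R h2R hR; ring)

lemma integrable_hR (hT : 0 < T) : Integrable (hR T) := by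
  exact (integrable_pow_quartic hT 0).congr (ae_of_all _ fun K => by simp [hR])
lemma integrable_h1R (hT : 0 < T) : Integrable (h1R T) := by
  refine ((integrable_pow_quartic hT 3).const_mul (-(4 * T))).congr (ae_of_all _ fun K => ?_)
  unfold h1R; ring
lemma integrable_h2R (hT : 0 < T) : Integrable (h2R T) := by
  refine (((integrable_pow_quartic hT 6).const_mul (16 * T ^ 2)).sub
    ((integrable_pow_quartic hT 2).const_mul (12 * T))).congr (ae_of_all _ fun K => ?_)
  simp only [Pi.sub_apply]; unfold h2R; ring

lemma hasDerivAt_hC (K : ℝ) : HasDerivAt (hC T) ((h1R T K : ℂ)) K :=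
  (hasDerivAt_hR K).ofReal_comp
lemma hasDerivAt_h1C (K : ℝ) : HasDerivAt (h1C T) ((h2R T K : ℂ)) K :=
  (hasDerivAt_h1R K).ofReal_comp

lemma deriv_hC : deriv (hC T) = h1C T := funext fun K => (hasDerivAt_hC K).deriv
lemma deriv_h1C : deriv (h1C T) = h2C T := funext fun K => (hasDerivAt_h1C K).deriv

lemma integrable_hC (hT : 0 < T) : Integrable (hC T) := (integrable_hR hT).ofReal
lemma integrable_h1C (hT : 0 < T) : Integrable (h1C T) := (integrable_h1R hT).ofReal
lemma integrable_h2C (hT : 0 < T) : Integrable (h2C T) := (integrable_h2R hT).ofReal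

lemma ft_h1C (hT : 0 < T) :
    𝓕 (h1C T) = fun ξ : ℝ => (2 * π * Complex.I * ξ) • 𝓕 (hC T) ξ := by
  rw [← deriv_hC]
  exact Real.fourier_deriv (integrable_hC hT)
    (fun K => (hasDerivAt_hC K).differentiableAt) (deriv_hC ▸ integrable_h1C hT)

lemma ft_h2C (hT : 0 < T) :
    𝓕 (h2C T) = fun ξ : ℝ =>
      (2 * π * Complex.I * ξ) • ((2 * π * Complex.I * ξ) • 𝓕 (hC T) ξ) := by
  have h := Real.fourier_deriv (integrable_h1C hT)
    (fun K => (hasDerivAt_h1C K).differentiableAt) (deriv_h1C ▸ integrable_h2C hT)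
  rw [deriv_h1C] at h
  rw [h, ft_h1C hT]

lemma norm_two_pi_I (ξ : ℝ) : ‖(2 * ↑π * Complex.I * (ξ:ℂ))‖ = 2 * π * |ξ| := by
  simp [norm_mul, Complex.norm_real]
  exact Or.inl Real.pi_pos.le

lemma ft_decay (hT : 0 < T) (ξ : ℝ) :
    ‖𝓕 (hC T) ξ‖ ≤ ((∫ K, ‖hC T K‖) + (∫ K, ‖h2C T K‖) / (2 * π) ^ 2) / (1 + ξ ^ 2) := by
  have hb0 : ‖𝓕 (hC T) ξ‖ ≤ ∫ K, ‖hC T K‖ :=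
    VectorFourier.norm_fourierIntegral_le_integral_norm _ _ _ _ _
  have hb2 : ‖𝓕 (h2C T) ξ‖ ≤ ∫ K, ‖h2C T K‖ :=
    VectorFourier.norm_fourierIntegral_le_integral_norm _ _ _ _ _
  have heq : ‖𝓕 (h2C T) ξ‖ = (2 * π * |ξ|) ^ 2 * ‖𝓕 (hC T) ξ‖ := by
    rw [ft_h2C hT]
    simp only [norm_smul, norm_two_pi_I]
    ring
  have hpos : (0:ℝ) < 1 + ξ ^ 2 := by positivity
  rw [le_div_iff₀ hpos]
  have h2pi : (0:ℝ) < (2 * π) ^ 2 := by positivity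
  have key2 : ξ ^ 2 * ‖𝓕 (hC T) ξ‖ ≤ (∫ K, ‖h2C T K‖) / (2 * π) ^ 2 := by
    rw [le_div_iff₀ h2pi]
    calc ξ ^ 2 * ‖𝓕 (hC T) ξ‖ * (2 * π) ^ 2 = (2 * π * |ξ|) ^ 2 * ‖𝓕 (hC T) ξ‖ := by
          rw [← _root_.sq_abs ξ]; ring
      _ = ‖𝓕 (h2C T) ξ‖ := heq.symm
      _ ≤ ∫ K, ‖h2C T K‖ := hb2
  nlinarith [norm_nonneg (𝓕 (hC T) ξ)]

lemma continuous_ft_hC (hT : 0 < T) : Continuous (𝓕 (hC T)) :=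
  VectorFourier.fourierIntegral_continuous Real.continuous_fourierChar
    (by exact continuous_inner) (integrable_hC hT)

lemma integrable_ft_hC (hT : 0 < T) : Integrable (𝓕 (hC T)) := by
  set M := (∫ K, ‖hC T K‖) + (∫ K, ‖h2C T K‖) / (2 * π) ^ 2 with hM
  refine Integrable.mono' (g := fun ξ : ℝ => M * (1 + ξ ^ 2)⁻¹)
    (integrable_inv_one_add_sq.const_mul M)
    (continuous_ft_hC hT).aestronglyMeasurable (ae_of_all _ fun ξ => ?_)
  calc ‖𝓕 (hC T) ξ‖ ≤ M / (1 + ξ ^ 2) := ft_decay hT ξ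
    _ = M * (1 + ξ ^ 2)⁻¹ := div_eq_mul_inv _ _

lemma integral_ft_hC (hT : 0 < T) : (∫ ξ, 𝓕 (hC T) ξ) = 1 := by
  have hcont : Continuous (hC T) := by unfold hC hR; fun_prop
  have h0 : 𝓕⁻ (𝓕 (hC T)) (0:ℝ) = hC T 0 :=
    (integrable_hC hT).fourierInv_fourier_eq (integrable_ft_hC hT) hcont.continuousAt
  rw [Real.fourierInv_eq'] at h0
  simp only [RCLike.inner_apply, conj_trivial, mul_zero, zero_mul, Complex.ofReal_zero,
    Complex.exp_zero, one_smul] at h0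
  rw [h0]
  unfold hC hR
  norm_num

noncomputable def FRe (T : ℝ) : ℝ → ℝ := fun Z => ∫ K : ℝ, rexp (-K ^ 4 * T) * Real.cos (K * Z)

lemma FRe_eq (hT : 0 < T) (Z : ℝ) : FRe T Z = (𝓕 (hC T) (Z / (2 * π))).re := by
  have hπ : (π : ℝ) ≠ 0 := Real.pi_ne_zero
  have hint : Integrable
      (fun v : ℝ => Complex.exp (↑(-2 * π * v * (Z / (2 * π))) * Complex.I) * hC T v) := by
    refine (integrable_hC hT).bdd_mul (c := 1) ?_ (ae_of_all _ fun v => ?_)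
    · exact (Complex.continuous_exp.comp
        ((Complex.continuous_ofReal.comp (by fun_prop)).mul continuous_const)).aestronglyMeasurable
    · rw [Complex.norm_exp_ofReal_mul_I]
  have hpt : ∀ v : ℝ,
      (Complex.exp (↑(-2 * π * v * (Z / (2 * π))) * Complex.I) * hC T v).re
        = rexp (-v ^ 4 * T) * Real.cos (v * Z) := by
    intro v
    have harg : -2 * π * v * (Z / (2 * π)) = -(v * Z) := by field_simp
    rw [harg]
    simp only [hC, hR]
    rw [Complex.mul_re, Complex.ofReal_re, Complex.ofReal_im, mul_zero, sub_zero,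
      Complex.exp_ofReal_mul_I_re, Real.cos_neg, mul_comm]
  calc FRe T Z = ∫ v : ℝ,
        (Complex.exp (↑(-2 * π * v * (Z / (2 * π))) * Complex.I) * hC T v).re := by
        unfold FRe; simp_rw [hpt]
    _ = (∫ v : ℝ, Complex.exp (↑(-2 * π * v * (Z / (2 * π))) * Complex.I) * hC T v).re :=
        integral_re hint
    _ = (𝓕 (hC T) (Z / (2 * π))).re := by
        rw [Real.fourier_real_eq_integral_exp_smul]
        simp_rw [smul_eq_mul]

lemma continuous_FRe (hT : 0 < T) : Continuous (FRe T) := by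
  have h : FRe T = fun Z => (𝓕 (hC T) (Z / (2 * π))).re := funext (FRe_eq hT)
  rw [h]
  exact Complex.continuous_re.comp ((continuous_ft_hC hT).comp (continuous_id'.div_const _))

lemma integrable_FRe (hT : 0 < T) : Integrable (FRe T) := by
  set M := (∫ K, ‖hC T K‖) + (∫ K, ‖h2C T K‖) / (2 * π) ^ 2 with hM
  have h2π : (2 * π : ℝ) ≠ 0 := by positivity
  refine Integrable.mono' (g := fun Z : ℝ => M * (1 + (Z / (2 * π)) ^ 2)⁻¹)
    ((integrable_inv_one_add_sq.const_mul M).comp_div h2π)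
    (continuous_FRe hT).aestronglyMeasurable (ae_of_all _ fun Z => ?_)
  rw [FRe_eq hT, Real.norm_eq_abs]
  calc |(𝓕 (hC T) (Z / (2 * π))).re| ≤ ‖𝓕 (hC T) (Z / (2 * π))‖ := Complex.abs_re_le_norm _
    _ ≤ M / (1 + (Z / (2 * π)) ^ 2) := ft_decay hT _
    _ = M * (1 + (Z / (2 * π)) ^ 2)⁻¹ := div_eq_mul_inv _ _

lemma integral_FRe (hT : 0 < T) : (∫ Z : ℝ, FRe T Z) = 2 * π := by
  have h2π : (0:ℝ) < 2 * π := by positivity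
  calc (∫ Z : ℝ, FRe T Z) = ∫ Z : ℝ, (𝓕 (hC T) (Z / (2 * π))).re := by
        simp_rw [FRe_eq hT]
    _ = (∫ Z : ℝ, 𝓕 (hC T) (Z / (2 * π))).re :=
        integral_re ((integrable_ft_hC hT).comp_div h2π.ne')
    _ = ((|2 * π| : ℝ) • (∫ ξ, 𝓕 (hC T) ξ)).re := by
        rw [MeasureTheory.Measure.integral_comp_div (𝓕 (hC T)) (2 * π)]
    _ = 2 * π := by
        rw [integral_ft_hC hT, _root_.abs_of_nonneg h2π.le]
        simp [Complex.real_smul]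

lemma FRe_even (Z : ℝ) : FRe T (-Z) = FRe T Z := by
  unfold FRe
  simp only [mul_neg, Real.cos_neg]

lemma integral_Iic_FRe (hT : 0 < T) : (∫ Z in Set.Iic (0:ℝ), FRe T Z) = π := by
  have he : (∫ Z in Set.Iic (0:ℝ), FRe T Z) = ∫ Z in Set.Ioi (0:ℝ), FRe T Z := by
    have h1 : (∫ Z in Set.Iic (0:ℝ), FRe T Z) = ∫ Z in Set.Iic (0:ℝ), FRe T (-Z) := by
      simp_rw [FRe_even]
    rw [h1, integral_comp_neg_Iic, neg_zero]
  have hsplit := intervalIntegral.integral_Iic_add_Ioi (b := (0:ℝ))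
    (integrable_FRe hT).integrableOn (integrable_FRe hT).integrableOn
  rw [integral_FRe hT] at hsplit
  linarith [he, hsplit]


lemma swap_Ioc (hT : 0 < T) (a b : ℝ) :
    (∫ Z in Set.Ioc a b, FRe T Z) =
      ∫ K : ℝ, rexp (-K ^ 4 * T) * (∫ Z in Set.Ioc a b, Real.cos (K * Z)) := by
  have hmaj : Integrable (fun p : ℝ × ℝ => rexp (-p.2 ^ 4 * T))
      ((volume.restrict (Set.Ioc a b)).prod volume) := by
    have h1 : Integrable (fun _ : ℝ => (1:ℝ)) (volume.restrict (Set.Ioc a b)) :=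
      integrableOn_const measure_Ioc_lt_top.ne
    exact (h1.mul_prod (integrable_hR hT)).congr (ae_of_all _ fun p => by simp [hR])
  have hint : Integrable
      (Function.uncurry fun Z K : ℝ => rexp (-K ^ 4 * T) * Real.cos (K * Z))
      ((volume.restrict (Set.Ioc a b)).prod volume) := by
    refine hmaj.mono' ?_ (ae_of_all _ fun p => ?_)
    · exact (Continuous.aestronglyMeasurable (by fun_prop))
    · simp only [Function.uncurry]
      rw [Real.norm_eq_abs, abs_mul, _root_.abs_of_nonneg (Real.exp_pos _).le]
      calc rexp (-p.2 ^ 4 * T) * |Real.cos (p.2 * p.1)|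
          ≤ rexp (-p.2 ^ 4 * T) * 1 :=
            mul_le_mul_of_nonneg_left (Real.abs_cos_le_one _) (Real.exp_pos _).le
        _ = rexp (-p.2 ^ 4 * T) := mul_one _
  have h := MeasureTheory.integral_integral_swap hint
  calc (∫ Z in Set.Ioc a b, FRe T Z)
      = ∫ Z in Set.Ioc a b, ∫ K : ℝ, rexp (-K ^ 4 * T) * Real.cos (K * Z) := rfl
    _ = ∫ K : ℝ, ∫ Z in Set.Ioc a b, rexp (-K ^ 4 * T) * Real.cos (K * Z) := h
    _ = ∫ K : ℝ, rexp (-K ^ 4 * T) * (∫ Z in Set.Ioc a b, Real.cos (K * Z)) := by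
        congr 1
        funext K
        exact integral_const_mul _ _

lemma swap_interval (hT : 0 < T) (X : ℝ) :
    (∫ Z in (0:ℝ)..X, FRe T Z) =
      ∫ K : ℝ, rexp (-K ^ 4 * T) * (∫ Z in (0:ℝ)..X, Real.cos (K * Z)) := by
  rcases le_total (0:ℝ) X with h | h
  · rw [intervalIntegral.integral_of_le h, swap_Ioc hT]
    congr 1
    funext K
    rw [intervalIntegral.integral_of_le h]
  · rw [intervalIntegral.integral_of_ge h, swap_Ioc hT, ← MeasureTheory.integral_neg]
    congr 1
    funext K
    rw [intervalIntegral.integral_of_ge h]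
    ring

lemma sinc_eval (K X : ℝ) :
    (∫ Z in (0:ℝ)..X, Real.cos (K * Z)) = if K = 0 then X else Real.sin (K * X) / K := by
  split_ifs with h
  · subst h; simp
  · rw [intervalIntegral.integral_comp_mul_left (f := Real.cos) h (a := 0) (b := X)]
    simp [integral_cos, smul_eq_mul]
    ring

lemma swap_final (hT : 0 < T) (X : ℝ) :
    (∫ Z in (0:ℝ)..X, FRe T Z) =
      ∫ K : ℝ, rexp (-K ^ 4 * T) * (if K = 0 then X else Real.sin (K * X) / K) := by
  rw [swap_interval hT]
  simp_rw [sinc_eval]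

lemma scaling (hT : 0 < T) (X : ℝ) :
    (∫ K : ℝ, rexp (-K ^ 4 * T) * (if K = 0 then X else Real.sin (K * X) / K)) =
      ∫ Q : ℝ, rexp (-Q ^ 4) * (if Q = 0 then X * T ^ (-(1 / 4 : ℝ))
        else Real.sin (Q * (X * T ^ (-(1 / 4 : ℝ)))) / Q) := by
  set c := T ^ (-(1 / 4 : ℝ)) with hcdef
  have hc0 : 0 < c := Real.rpow_pos_of_pos hT _
  have hc4 : c ^ 4 * T = 1 := by
    rw [hcdef, ← Real.rpow_natCast (T ^ (-(1 / 4 : ℝ))) 4, ← Real.rpow_mul hT.le]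
    norm_num
    rw [Real.rpow_neg_one]
    exact inv_mul_cancel₀ hT.ne'
  have hswap := MeasureTheory.Measure.integral_comp_mul_left
    (fun K => rexp (-K ^ 4 * T) * (if K = 0 then X else Real.sin (K * X) / K)) c
  have habs : |c⁻¹| = c⁻¹ := _root_.abs_of_nonneg (inv_nonneg.2 hc0.le)
  rw [habs, smul_eq_mul] at hswap
  have hres : (∫ K : ℝ, rexp (-K ^ 4 * T) * (if K = 0 then X else Real.sin (K * X) / K)) =
      c * ∫ Q : ℝ, rexp (-(c * Q) ^ 4 * T) *
        (if c * Q = 0 then X else Real.sin (c * Q * X) / (c * Q)) := by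
    rw [hswap]
    rw [← mul_assoc, mul_inv_cancel₀ hc0.ne', one_mul]
  rw [hres, ← integral_const_mul]
  congr 1
  funext Q
  have harg : -(c * Q) ^ 4 * T = -Q ^ 4 := by
    rw [mul_pow]
    linear_combination (-(Q ^ 4)) * hc4
  by_cases hQ : Q = 0
  · subst hQ
    simp [harg]
    ring
  · have hcQ : c * Q ≠ 0 := mul_ne_zero hc0.ne' hQ
    rw [if_neg hcQ, if_neg hQ, harg]
    rw [show c * Q * X = Q * (X * c) by ring]
    field_simp

lemma green_Iic (hT : 0 < T) (X : ℝ) :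
    (∫ z in Set.Iic X, greenFn z T) = 1 / 2 + (1 / (2 * π)) *
      ∫ Q : ℝ, rexp (-Q ^ 4) * (if Q = 0 then X * T ^ (-(1 / 4 : ℝ))
        else Real.sin (Q * (X * T ^ (-(1 / 4 : ℝ)))) / Q) := by
  have hgf : ∀ z : ℝ, greenFn z T = (1 / (2 * π)) * FRe T z := fun z => rfl
  have hIic : (∫ Z in Set.Iic X, FRe T Z) = π + ∫ Z in (0:ℝ)..X, FRe T Z := by
    have := intervalIntegral.integral_Iic_sub_Iic
      (a := (0:ℝ)) (b := X) (integrable_FRe hT).integrableOn (integrable_FRe hT).integrableOn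
    rw [integral_Iic_FRe hT] at this
    linarith
  calc (∫ z in Set.Iic X, greenFn z T)
      = ∫ z in Set.Iic X, (1 / (2 * π)) * FRe T z := by simp_rw [hgf]
    _ = (1 / (2 * π)) * ∫ z in Set.Iic X, FRe T z := integral_const_mul _ _
    _ = (1 / (2 * π)) * (π + ∫ Z in (0:ℝ)..X, FRe T Z) := by rw [hIic]
    _ = 1 / 2 + (1 / (2 * π)) * ∫ Z in (0:ℝ)..X, FRe T Z := by
        have hπ : (π : ℝ) ≠ 0 := Real.pi_ne_zero
        field_simp
    _ = _ := by rw [swap_final hT, scaling hT]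

end core



/-- Stepped initial film: for the step profile `Δ₀ = θ₀·𝟙_{[0,∞)}`, the solution
`Δ(X,T) = ∫ Y, G(X−Y,T) Δ₀(Y) dY` satisfies, for every `T > 0` and real `X`,
`Δ(X,T) = (θ₀/2)(1 + (1/π) ∫ Q, e^{−Q⁴} sin(Q X T^{−1/4})/Q dQ)` (where `sin(QU)/Q` takes
the value `U` at `Q = 0`); in particular `Δ` depends on `(X,T)` only through the
self-similar variable `U = X T^{−1/4}`, so the stepped-film solution is self-similar at
all positive times. -/
theorem stepped_film_self_similar (θ₀ : ℝ) (Δ₀ : ℝ → ℝ)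
    (hΔ₀ : ∀ Y : ℝ, Δ₀ Y = if 0 ≤ Y then θ₀ else 0)
    (Δ : ℝ → ℝ → ℝ) (hΔ : ∀ X T : ℝ, Δ X T = ∫ Y : ℝ, greenFn (X - Y) T * Δ₀ Y) :
    (∀ (T : ℝ), 0 < T → ∀ X : ℝ,
      Δ X T = (θ₀ / 2) * (1 + (1 / Real.pi) * ∫ Q : ℝ, Real.exp (-Q ^ 4) *
        (if Q = 0 then X * T ^ (-(1 / 4 : ℝ))
          else Real.sin (Q * (X * T ^ (-(1 / 4 : ℝ)))) / Q))) ∧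
    (∀ X₁ T₁ X₂ T₂ : ℝ, 0 < T₁ → 0 < T₂ →
      X₁ * T₁ ^ (-(1 / 4 : ℝ)) = X₂ * T₂ ^ (-(1 / 4 : ℝ)) → Δ X₁ T₁ = Δ X₂ T₂) := by
  have main : ∀ (T : ℝ), 0 < T → ∀ X : ℝ,
      Δ X T = (θ₀ / 2) * (1 + (1 / Real.pi) * ∫ Q : ℝ, Real.exp (-Q ^ 4) *
        (if Q = 0 then X * T ^ (-(1 / 4 : ℝ))
          else Real.sin (Q * (X * T ^ (-(1 / 4 : ℝ)))) / Q)) := by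
    intro T hT X
    have hstep : ∀ Y : ℝ, greenFn (X - Y) T * Δ₀ Y =
        θ₀ * (Set.Iic X).indicator (fun z => greenFn z T) (X - Y) := by
      intro Y
      rw [hΔ₀ Y, Set.indicator_apply]
      by_cases h : 0 ≤ Y
      · rw [if_pos h, if_pos (by simp only [Set.mem_Iic]; linarith : X - Y ∈ Set.Iic X)]
        ring
      · rw [if_neg h, if_neg (by simp only [Set.mem_Iic, not_le]; linarith :
          ¬ (X - Y ∈ Set.Iic X))]
        ring
    calc Δ X T = ∫ Y : ℝ, greenFn (X - Y) T * Δ₀ Y := hΔ X T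
      _ = ∫ Y : ℝ, θ₀ * (Set.Iic X).indicator (fun z => greenFn z T) (X - Y) := by
          simp_rw [hstep]
      _ = θ₀ * ∫ Y : ℝ, (Set.Iic X).indicator (fun z => greenFn z T) (X - Y) :=
          integral_const_mul _ _
      _ = θ₀ * ∫ z : ℝ, (Set.Iic X).indicator (fun z => greenFn z T) z := by
          rw [integral_sub_left_eq_self
            (fun z => (Set.Iic X).indicator (fun z => greenFn z T) z) volume X]
      _ = θ₀ * ∫ z in Set.Iic X, greenFn z T := by
          rw [integral_indicator measurableSet_Iic]
      _ = θ₀ * (1 / 2 + (1 / (2 * π)) * ∫ Q : ℝ, rexp (-Q ^ 4) *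
            (if Q = 0 then X * T ^ (-(1 / 4 : ℝ))
              else Real.sin (Q * (X * T ^ (-(1 / 4 : ℝ)))) / Q)) := by
          rw [green_Iic hT X]
      _ = _ := by ring
  refine ⟨main, fun X₁ T₁ X₂ T₂ hT₁ hT₂ hU => ?_⟩
  rw [main T₁ hT₁ X₁, main T₂ hT₂ X₂, hU]
end
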